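/- arXiv:1504.06005 — 2 statements merged into one kernel-verified Lean document; each statement's English description precedes it below -/
import Mathlib

section
/- For f, g ∈ M₁ (multiplicative functions with f(0₁,1₁) = g(0₁,1₁) = 1), the pinched convolution f ⋆̌ g defined by (f ⋆̌ g)(0_n,1_n) = Σ_{π ∈ NC'(n)} f(0_n, π) g(0_n, K(π)) satisfies φ_f(φ_{f ⋆̌ g}(z)) = φ_{f ∗ g}(z), where φ_h(z) = Σ_{n≥1} h(0_n,1_n) z^n. -/
open scoped Classical
noncomputable section

/-- Formal composition `f ∘ g` of power series (intended for `g` with zero constant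
coefficient, in which case this is the usual substitution of `g` into `f`). -/
def pscomp (f g : PowerSeries ℂ) : PowerSeries ℂ :=
  PowerSeries.mk fun n => ∑ k ∈ Finset.range (n + 1),
    (PowerSeries.coeff k f) * PowerSeries.coeff n (g ^ k)

/-- The series `Σ_{n ≥ 1} f n · zⁿ` associated to a sequence `f`. -/
def phiSeries (f : ℕ → ℂ) : PowerSeries ℂ :=
  PowerSeries.mk fun n => if n = 0 then 0 else f n

/-- A setoid (partition) is non-crossing with respect to a position key `k`:
there is no crossing `k a < k b < k c < k d` with `a ∼ c`, `b ∼ d`, `a ≁ b`. -/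
def NonCrossingOn {α : Type*} (k : α → ℤ) (s : Setoid α) : Prop :=
  ∀ a b c d : α, k a < k b → k b < k c → k c < k d → s.r a c → s.r b d → s.r a b

/-- Non-crossing partitions of `{1, …, n}` in the usual order. -/
def IsNC {n : ℕ} (s : Setoid (Fin n)) : Prop :=
  NonCrossingOn (fun i => (i.val : ℤ)) s

def half {n : ℕ} (x : Fin (2 * n)) : Fin n := ⟨x.val / 2, by omega⟩

/-- The interleaved partition on `{1, 1', 2, 2', …, n, n'}`: even positions are the
unprimed points, carrying `p`; odd positions are the primed points, carrying `t`. -/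
def interleave {n : ℕ} (p t : Setoid (Fin n)) : Setoid (Fin (2 * n)) where
  r x y := x.val % 2 = y.val % 2 ∧ (x.val % 2 = 0 → p.r (half x) (half y)) ∧
    (x.val % 2 = 1 → t.r (half x) (half y))
  iseqv := by
    refine ⟨fun x => ⟨rfl, fun _ => p.iseqv.refl _, fun _ => t.iseqv.refl _⟩, ?_, ?_⟩
    · rintro x y ⟨h1, h2, h3⟩
      exact ⟨h1.symm, fun h0 => p.iseqv.symm (h2 (h1.trans h0)),
        fun h0 => t.iseqv.symm (h3 (h1.trans h0))⟩
    · rintro x y z ⟨h1, h2, h3⟩ ⟨h1', h2', h3'⟩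
      exact ⟨h1.trans h1', fun h0 => p.iseqv.trans (h2 h0) (h2' (h1.symm.trans h0)),
        fun h0 => t.iseqv.trans (h3 h0) (h3' (h1.symm.trans h0))⟩

/-- The Kreweras complement of `p ∈ NC(n)`: the largest partition `t` of the primed
points such that the interleaving of `p` and `t` is non-crossing on `{1,1',…,n,n'}`. -/
def kreweras {n : ℕ} (p : Setoid (Fin n)) : Setoid (Fin n) :=
  sSup {t | IsNC (interleave p t)}

/-- The blocks of a partition, as a finset of finsets. -/
def blocksOf {n : ℕ} (s : Setoid (Fin n)) : Finset (Finset (Fin n)) :=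
  Finset.univ.image fun i => Finset.univ.filter fun j => s.r i j

/-- The value `f(0_n, π) = ∏_{V block of π} f(0_{|V|}, 1_{|V|})` of the multiplicative
function determined by the sequence `f n = f(0_n, 1_n)`. -/
def fval {n : ℕ} (f : ℕ → ℂ) (s : Setoid (Fin n)) : ℂ :=
  ∏ B ∈ blocksOf s, f B.card

instance setoidFintype (n : ℕ) : Fintype (Setoid (Fin n)) :=
  Fintype.ofInjective (fun s => fun a b : Fin n => decide (s.r a b)) (by
    intro s t h
    apply Setoid.ext
    intro a b
    have := congrFun (congrFun h a) b
    simpa [decide_eq_decide] using this)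

/-- Restriction of a partition to a block `B`, relabelled along the order
isomorphism `Fin B.card ≃o B`. -/
def restrictS {n : ℕ} (s : Setoid (Fin n)) (B : Finset (Fin n)) : Setoid (Fin B.card) :=
  Setoid.comap (fun j => (B.orderIsoOfFin rfl j).val) s

/-- The value on the interval `[ρ, σ]` of the (canonical multiplicative extension of
the) multiplicative function determined by the sequence `f`, via the canonical
decomposition `[ρ, σ] ≅ ∏_{B block of σ} [ρ|_B, 1_B]` and
`f(τ, 1_m) = ∏_{C block of K(τ)} f(0_{|C|}, 1_{|C|})`. -/
def intervalVal {n : ℕ} (f : ℕ → ℂ) (ρ σ : Setoid (Fin n)) : ℂ :=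
  ∏ B ∈ blocksOf σ, fval f (kreweras (restrictS ρ B))

/-- `NC'(n)`: non-crossing partitions having `{1}` as a (singleton) block. -/
def IsNCPrime {n : ℕ} (hn : 0 < n) (s : Setoid (Fin n)) : Prop :=
  IsNC s ∧ ∀ j, s.r ⟨0, hn⟩ j → j = ⟨0, hn⟩

/-- The sequence of values `(f ⋆̌ g)(0_n, 1_n) = Σ_{π ∈ NC'(n)} f(0_n,π) g(0_n,K(π))`
of the pinched convolution. -/
def pinchSeq (f g : ℕ → ℂ) : ℕ → ℂ
  | 0 => 0
  | k + 1 => ∑ π : {s : Setoid (Fin (k + 1)) // IsNCPrime (Nat.succ_pos k) s},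
      fval f π.1 * fval g (kreweras π.1)

/-- The sequence of values `(f ∗ g)(0_n, 1_n) = Σ_{π ∈ NC(n)} f(0_n,π) g(0_n,K(π))`
of the multiplicative convolution. -/
def convSeq (f g : ℕ → ℂ) : ℕ → ℂ
  | 0 => 0
  | k + 1 => ∑ π : {s : Setoid (Fin (k + 1)) // IsNC s},
      fval f π.1 * fval g (kreweras π.1)

namespace NS

variable {n : ℕ}

/-- The explicit Kreweras complement: `j ~ l` iff they lie on the same side of every arc. -/
def kc (p : Setoid (Fin n)) : Setoid (Fin n) where
  r j l := ∀ a b : Fin n, p.r a b → ((a ≤ j ∧ j < b) ↔ (a ≤ l ∧ l < b))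
  iseqv := ⟨fun _ _ _ _ => Iff.rfl, fun h a b hab => (h a b hab).symm,
    fun h1 h2 a b hab => (h1 a b hab).trans (h2 a b hab)⟩

def ev (a : Fin n) : Fin (2 * n) := ⟨2 * a.val, by have := a.isLt; omega⟩
def od (a : Fin n) : Fin (2 * n) := ⟨2 * a.val + 1, by have := a.isLt; omega⟩

lemma half_ev (a : Fin n) : half (ev a) = a := by
  apply Fin.ext; show (2 * a.val) / 2 = a.val; omega

lemma half_od (a : Fin n) : half (od a) = a := by
  apply Fin.ext; show (2 * a.val + 1) / 2 = a.val; omega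

lemma il_ee {p t : Setoid (Fin n)} {a b : Fin n} :
    (interleave p t).r (ev a) (ev b) ↔ p.r a b := by
  constructor
  · intro h
    have := h.2.1 (by show 2 * a.val % 2 = 0; omega)
    rwa [half_ev, half_ev] at this
  · intro h
    refine ⟨by show 2*a.val % 2 = 2*b.val % 2; omega, fun _ => ?_, fun h0 => ?_⟩
    · rwa [half_ev, half_ev]
    · exact absurd h0 (by show ¬ (2*a.val % 2 = 1); omega)

lemma il_oo {p t : Setoid (Fin n)} {a b : Fin n} :
    (interleave p t).r (od a) (od b) ↔ t.r a b := by
  constructor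
  · intro h
    have := h.2.2 (by show (2 * a.val + 1) % 2 = 1; omega)
    rwa [half_od, half_od] at this
  · intro h
    refine ⟨by show (2*a.val+1) % 2 = (2*b.val+1) % 2; omega, fun h0 => ?_, fun _ => ?_⟩
    · exact absurd h0 (by show ¬ ((2*a.val+1) % 2 = 0); omega)
    · rwa [half_od, half_od]

lemma valid_le_kc {p t : Setoid (Fin n)} (ht : IsNC (interleave p t)) : t ≤ kc p := by
  have aux : ∀ j l a b : Fin n, t.r j l → p.r a b → a ≤ j ∧ j < b → a ≤ l ∧ l < b := by
    intro j l a b hjl hab hj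
    rw [Fin.le_def, Fin.lt_def] at hj
    by_contra hcon
    rw [Fin.le_def, Fin.lt_def] at hcon
    have hcases : l.val < a.val ∨ b.val ≤ l.val := by omega
    rcases hcases with hc | hc
    · have := ht (od l) (ev a) (od j) (ev b)
        (by show ((2*l.val+1 : ℕ) : ℤ) < ((2*a.val : ℕ) : ℤ); push_cast; omega)
        (by show ((2*a.val : ℕ) : ℤ) < ((2*j.val+1 : ℕ) : ℤ); push_cast; omega)
        (by show ((2*j.val+1 : ℕ) : ℤ) < ((2*b.val : ℕ) : ℤ); push_cast; omega)
        (il_oo.2 (t.iseqv.symm hjl)) (il_ee.2 hab)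
      have hpar := this.1
      revert hpar
      show ¬ ((2*l.val+1) % 2 = (2*a.val) % 2)
      omega
    · have := ht (ev a) (od j) (ev b) (od l)
        (by show ((2*a.val : ℕ) : ℤ) < ((2*j.val+1 : ℕ) : ℤ); push_cast; omega)
        (by show ((2*j.val+1 : ℕ) : ℤ) < ((2*b.val : ℕ) : ℤ); push_cast; omega)
        (by show ((2*b.val : ℕ) : ℤ) < ((2*l.val+1 : ℕ) : ℤ); push_cast; omega)
        (il_ee.2 hab) (il_oo.2 hjl)
      have hpar := this.1
      revert hpar
      show ¬ ((2*a.val) % 2 = (2*j.val+1) % 2)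
      omega
  intro j l hjl
  intro a b hab
  exact ⟨fun h => aux j l a b hjl hab h, fun h => aux l j a b (t.iseqv.symm hjl) hab h⟩

lemma kc_valid {p : Setoid (Fin n)} (hp : IsNC p) : IsNC (interleave p (kc p)) := by
  intro x1 x2 x3 x4 h12 h23 h34 h13 h24
  have h12' : ((x1.val : ℤ)) < ((x2.val : ℤ)) := h12
  have h23' : ((x2.val : ℤ)) < ((x3.val : ℤ)) := h23
  have h34' : ((x3.val : ℤ)) < ((x4.val : ℤ)) := h34
  have e1 : (half x1).val = x1.val / 2 := rfl
  have e2 : (half x2).val = x2.val / 2 := rfl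
  have e3 : (half x3).val = x3.val / 2 := rfl
  have e4 : (half x4).val = x4.val / 2 := rfl
  have p13 := h13.1
  have p24 := h24.1
  rcases Nat.mod_two_eq_zero_or_one x1.val with m1 | m1 <;>
    rcases Nat.mod_two_eq_zero_or_one x2.val with m2 | m2
  · -- both even : use hp
    refine ⟨by omega, fun _ => ?_, fun h0 => absurd h0 (by omega)⟩
    refine hp (half x1) (half x2) (half x3) (half x4) ?_ ?_ ?_
      (h13.2.1 m1) (h24.2.1 m2) <;> (push_cast; omega)
  · -- x1 even, x2 odd : contradiction via kc rel of (half x2, half x4)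
    exfalso
    have H := h24.2.2 m2 (half x1) (half x3) (h13.2.1 m1)
    rw [Fin.le_def, Fin.lt_def, Fin.le_def, Fin.lt_def] at H
    omega
  · -- x1 odd, x2 even : contradiction via kc rel of (half x1, half x3)
    exfalso
    have H := h13.2.2 m1 (half x2) (half x4) (h24.2.1 m2)
    rw [Fin.le_def, Fin.lt_def, Fin.le_def, Fin.lt_def] at H
    omega
  · -- both odd
    refine ⟨by omega, fun h0 => absurd h0 (by omega), fun _ => ?_⟩
    intro u v huv
    have A := h13.2.2 m1 u v huv
    have B := h24.2.2 m2 u v huv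
    rw [Fin.le_def, Fin.lt_def, Fin.le_def, Fin.lt_def] at A B ⊢
    omega

theorem kreweras_eq_kc {p : Setoid (Fin n)} (hp : IsNC p) : kreweras p = kc p :=
  le_antisymm (sSup_le fun _ ht => valid_le_kc ht) (le_sSup (kc_valid hp))


end NS

namespace NS2
open Composition NS

variable {n : ℕ} (c : Composition n)

lemma emb_val (i : Fin c.length) (a : Fin (c.blocksFun i)) :
    ((c.embedding i a) : Fin n).val = c.sizeUpTo i + a.val := c.coe_embedding i a

lemma x_lb (x : Fin n) : c.sizeUpTo (c.index x) ≤ x.val := c.sizeUpTo_index_le x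

lemma x_ub (x : Fin n) : x.val < c.sizeUpTo (c.index x) + c.blocksFun (c.index x) := by
  have h := c.lt_sizeUpTo_index_succ x
  rwa [Fin.val_succ, c.sizeUpTo_succ'] at h

lemma index_of_mem {i : Fin c.length} {x : Fin n} (h1 : c.sizeUpTo i ≤ x.val)
    (h2 : x.val < c.sizeUpTo i + c.blocksFun i) : c.index x = i := by
  have hx : x ∈ Set.range (c.embedding i) := c.mem_range_embedding_iff.2
    ⟨h1, by rw [show ((i : ℕ)).succ = (i : ℕ) + 1 from rfl, c.sizeUpTo_succ']; exact h2⟩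
  obtain ⟨a, ha⟩ := hx
  rw [← ha, c.index_embedding]

lemma emb_idx {i j : Fin c.length} {a : Fin (c.blocksFun i)} {b : Fin (c.blocksFun j)}
    (h : (c.embedding i a : Fin n) = c.embedding j b) : i = j := by
  have h1 := c.index_embedding i a
  have h2 := c.index_embedding j b
  rw [h, h2] at h1
  exact h1.symm

lemma stu_cases (i j : Fin c.length) :
    i = j ∨ c.sizeUpTo i + c.blocksFun i ≤ c.sizeUpTo j ∨
      c.sizeUpTo j + c.blocksFun j ≤ c.sizeUpTo i := by
  rcases lt_trichotomy i j with h | h | h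
  · refine Or.inr (Or.inl ?_)
    rw [← c.sizeUpTo_succ' i]
    exact c.monotone_sizeUpTo (by exact_mod_cast h)
  · exact Or.inl h
  · refine Or.inr (Or.inr ?_)
    rw [← c.sizeUpTo_succ' j]
    exact c.monotone_sizeUpTo (by exact_mod_cast h)

lemma stu_cases' (i j : Fin c.length) :
    (c.sizeUpTo i = c.sizeUpTo j ∧ c.blocksFun i = c.blocksFun j) ∨
      c.sizeUpTo i + c.blocksFun i ≤ c.sizeUpTo j ∨
      c.sizeUpTo j + c.blocksFun j ≤ c.sizeUpTo i := by
  rcases stu_cases c i j with h | h | h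
  · subst h; exact Or.inl ⟨rfl, rfl⟩
  · exact Or.inr (Or.inl h)
  · exact Or.inr (Or.inr h)

/-- First element of the interval of the composition containing `x`. -/
def isF (x : Fin n) : Prop := x.val = c.sizeUpTo (c.index x)

def zer (i : Fin c.length) : Fin (c.blocksFun i) := ⟨0, c.one_le_blocksFun i⟩

lemma isF_emb {i : Fin c.length} {a : Fin (c.blocksFun i)} :
    isF c (c.embedding i a) ↔ a = zer c i := by
  unfold isF
  rw [c.index_embedding, emb_val]
  constructor
  · intro h; apply Fin.ext; show a.val = 0; omega
  · intro h; subst h; show c.sizeUpTo i + 0 = _; omega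

lemma isF_start (i : Fin c.length) : isF c (c.embedding i (zer c i)) := (isF_emb c).2 rfl

lemma eq_emb_self (x : Fin n) : x = c.embedding (c.index x) (c.invEmbedding x) :=
  (c.embedding_comp_inv x).symm

lemma isF_eq_start {x : Fin n} (h : isF c x) : x = c.embedding (c.index x) (zer c (c.index x)) := by
  have hx := eq_emb_self c x
  have : c.invEmbedding x = zer c (c.index x) := by
    apply Fin.ext
    have := c.coe_invEmbedding x
    show (c.invEmbedding x).val = 0
    unfold isF at h
    omega
  rw [← this]; exact hx

variable (P : ∀ i : Fin c.length, Setoid (Fin (c.blocksFun i)))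

/-- Primality: in each local partition the class of `0` is a singleton. -/
def Prime : Prop := ∀ (i : Fin c.length) (b : Fin (c.blocksFun i)), (P i).r (zer c i) b → b = zer c i

def asmRel (x y : Fin n) : Prop :=
  (isF c x ∧ isF c y) ∨ ∃ (i : Fin c.length) (a : Fin (c.blocksFun i)) (b : Fin (c.blocksFun i)),
    (P i).r a b ∧ x = c.embedding i a ∧ y = c.embedding i b

/-- The assembled partition: the `0`s of the local partitions are merged into one block,
the other local blocks are kept. -/
def asm (hP : Prime c P) : Setoid (Fin n) where
  r := asmRel c P
  iseqv := by
    constructor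
    · intro x
      exact Or.inr ⟨c.index x, c.invEmbedding x, c.invEmbedding x, (P _).iseqv.refl _,
        eq_emb_self c x, eq_emb_self c x⟩
    · rintro x y (⟨h1, h2⟩ | ⟨i, a, b, hab, hx, hy⟩)
      · exact Or.inl ⟨h2, h1⟩
      · exact Or.inr ⟨i, b, a, (P i).iseqv.symm hab, hy, hx⟩
    · rintro x y z (⟨h1, h2⟩ | ⟨i, a, b, hab, hx, hy⟩) (⟨h1', h2'⟩ | ⟨i', a', b', hab', hy', hz'⟩)
      · exact Or.inl ⟨h1, h2'⟩
      · -- y is a start and y = emb i' a' : then a' = zer, so b' = zer, z is a start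
        left
        refine ⟨h1, ?_⟩
        have ha' : a' = zer c i' := by rw [hy'] at h2; exact (isF_emb c).1 h2
        have hb' : b' = zer c i' := hP i' b' (by rw [← ha']; exact hab')
        rw [hz', hb']
        exact isF_start c i'
      · -- x,y in block i, y and z starts
        left
        refine ⟨?_, h2'⟩
        have hb : b = zer c i := by rw [hy] at h1'; exact (isF_emb c).1 h1'
        
        have ha : a = zer c i := hP i a (by rw [← hb]; exact (P i).iseqv.symm hab)
        rw [hx, ha]
        exact isF_start c i
      · -- both second clauses
        have hii : i = i' := emb_idx c (hy.symm.trans hy')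
        subst hii
        have hba : b = a' := (c.embedding i).injective (hy.symm.trans hy')
        exact Or.inr ⟨i, a, b', (P i).iseqv.trans hab (hba ▸ hab'), hx, hz'⟩

theorem asm_isNC (hP : Prime c P) (hNC : ∀ i, IsNC (P i)) : IsNC (asm c P hP) := by
  intro x1 x2 x3 x4 h12 h23 h34 h13 h24
  have h12' : ((x1.val : ℤ)) < ((x2.val : ℤ)) := h12
  have h23' : ((x2.val : ℤ)) < ((x3.val : ℤ)) := h23
  have h34' : ((x3.val : ℤ)) < ((x4.val : ℤ)) := h34
  rcases h13 with ⟨f1, f3⟩ | ⟨i, a1, a3, hr13, e1, e3⟩ <;>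
    rcases h24 with ⟨f2, f4⟩ | ⟨j, a2, a4, hr24, e2, e4⟩
  · exact Or.inl ⟨f1, f2⟩
  · -- x1, x3 starts; x2, x4 in block j : impossible since x3 strictly inside block j
    exfalso
    have hv2 := emb_val c j a2; have hv4 := emb_val c j a4
    rw [← e2] at hv2; rw [← e4] at hv4
    have hi3 : c.index x3 = j := index_of_mem c (by omega) (by have := a4.isLt; omega)
    unfold isF at f3
    rw [hi3] at f3
    omega
  · -- x1, x3 in block i; x2, x4 starts : impossible since x2 strictly inside block i
    exfalso
    have hv1 := emb_val c i a1; have hv3 := emb_val c i a3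
    rw [← e1] at hv1; rw [← e3] at hv3
    have hi2 : c.index x2 = i := index_of_mem c (by omega) (by have := a3.isLt; omega)
    unfold isF at f2
    rw [hi2] at f2
    omega
  · -- both in blocks i, j
    have hv1 := emb_val c i a1; have hv3 := emb_val c i a3
    rw [← e1] at hv1; rw [← e3] at hv3
    have hv2 := emb_val c j a2; have hv4 := emb_val c j a4
    rw [← e2] at hv2; rw [← e4] at hv4
    rcases stu_cases c i j with hij | hd | hd
    · subst hij
      refine Or.inr ⟨i, a1, a2, ?_, e1, e2⟩
      refine hNC i a1 a2 a3 a4 ?_ ?_ ?_ hr13 hr24 <;> (push_cast; omega)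
    · exfalso; have := a2.isLt; have := a3.isLt; omega
    · exfalso; have := a2.isLt; have := a1.isLt; omega

def bdRel (T : ∀ i : Fin c.length, Setoid (Fin (c.blocksFun i))) (x y : Fin n) : Prop :=
  ∃ (i : Fin c.length) (a : Fin (c.blocksFun i)) (b : Fin (c.blocksFun i)),
    (T i).r a b ∧ x = c.embedding i a ∧ y = c.embedding i b

/-- The block-diagonal partition assembled from partitions of the intervals. -/
def bd (T : ∀ i : Fin c.length, Setoid (Fin (c.blocksFun i))) : Setoid (Fin n) where
  r := bdRel c T
  iseqv := by
    constructor
    · intro x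
      exact ⟨c.index x, c.invEmbedding x, c.invEmbedding x, (T _).iseqv.refl _,
        eq_emb_self c x, eq_emb_self c x⟩
    · rintro x y ⟨i, a, b, hab, hx, hy⟩
      exact ⟨i, b, a, (T i).iseqv.symm hab, hy, hx⟩
    · rintro x y z ⟨i, a, b, hab, hx, hy⟩ ⟨i', a', b', hab', hy', hz'⟩
      have hii : i = i' := emb_idx c (hy.symm.trans hy')
      subst hii
      have hba : b = a' := (c.embedding i).injective (hy.symm.trans hy')
      exact ⟨i, a, b', (T i).iseqv.trans hab (hba ▸ hab'), hx, hz'⟩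

lemma bd_rel_iff (T : ∀ i : Fin c.length, Setoid (Fin (c.blocksFun i)))
    {i : Fin c.length} (a b : Fin (c.blocksFun i)) :
    (bd c T).r (c.embedding i a) (c.embedding i b) ↔ (T i).r a b := by
  constructor
  · rintro ⟨i', a', b', hab', hx', hy'⟩
    have hii : i' = i := (emb_idx c hx'.symm)
    subst hii
    have h1 : a = a' := (c.embedding i').injective hx'
    have h2 : b = b' := (c.embedding i').injective hy'
    rw [h1, h2]; exact hab'
  · intro h
    exact ⟨i, a, b, h, rfl, rfl⟩

theorem kc_asm (hn : 0 < n) (hP : Prime c P) :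
    kc (asm c P hP) = bd c (fun i => kc (P i)) := by
  have hlen : 0 < c.length := c.length_pos_of_pos hn
  apply Setoid.ext
  intro j l
  constructor
  · -- from same-side of all assembled arcs to block-diagonal of local kc's
    intro H
    -- step 1 : j and l are in the same interval
    have hidx : c.index j = c.index l := by
      by_contra hne
      -- use the arc between the start of interval 0 and the start of another interval
      have harc : ∀ i1 : Fin c.length, (asm c P hP).r (c.embedding ⟨0, hlen⟩ (zer c ⟨0, hlen⟩))
          (c.embedding i1 (zer c i1)) := fun i1 => Or.inl ⟨isF_start c _, isF_start c _⟩
      have key : ∀ i1 : Fin c.length, (j.val < c.sizeUpTo i1 ↔ l.val < c.sizeUpTo i1) := by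
        intro i1
        have h := H _ _ (harc i1)
        rw [Fin.le_def, Fin.lt_def, Fin.le_def, Fin.lt_def] at h
        have hz : ((c.embedding ⟨0, hlen⟩ (zer c ⟨0, hlen⟩)) : Fin n).val = 0 := by
          rw [emb_val]; show c.sizeUpTo 0 + 0 = 0; simp [Composition.sizeUpTo_zero]
        rw [hz, emb_val] at h
        have hzv : (zer c i1).val = 0 := rfl
        constructor
        · intro hj; have := h.1 ⟨by omega, by omega⟩; omega
        · intro hl; have := h.2 ⟨by omega, by omega⟩; omega
      have hj1 := x_lb c j; have hj2 := x_ub c j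
      have hl1 := x_lb c l; have hl2 := x_ub c l
      rcases Fin.lt_or_lt_of_ne hne with hlt | hlt
      · have h2 : c.sizeUpTo (c.index j) + c.blocksFun (c.index j) ≤ c.sizeUpTo (c.index l) := by
          rw [← c.sizeUpTo_succ' (c.index j)]
          exact c.monotone_sizeUpTo (by exact_mod_cast hlt)
        have h1 := (key (c.index l)).1 (by omega)
        omega
      · have h2 : c.sizeUpTo (c.index l) + c.blocksFun (c.index l) ≤ c.sizeUpTo (c.index j) := by
          rw [← c.sizeUpTo_succ' (c.index l)]
          exact c.monotone_sizeUpTo (by exact_mod_cast hlt)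
        have h1 := (key (c.index j)).2 (by omega)
        omega
    -- step 2 : local same-side property
    obtain ⟨b, hb⟩ : l ∈ Set.range (c.embedding (c.index j)) := by
      rw [Composition.mem_range_embedding_iff']; exact hidx
    refine ⟨c.index j, c.invEmbedding j, b, ?_, eq_emb_self c j, hb.symm⟩
    intro u v huv
    have h := H _ _ (Or.inr ⟨c.index j, u, v, huv, rfl, rfl⟩ :
      (asm c P hP).r (c.embedding (c.index j) u) (c.embedding (c.index j) v))
    rw [Fin.le_def, Fin.lt_def, Fin.le_def, Fin.lt_def] at h
    rw [emb_val, emb_val] at h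
    have hj1 := x_lb c j; have hj2 := x_ub c j
    have hlval : l.val = c.sizeUpTo (c.index j) + b.val := by rw [← hb, emb_val]
    have hjval : j.val = c.sizeUpTo (c.index j) + (c.invEmbedding j).val := by
      conv_lhs => rw [eq_emb_self c j]
      rw [emb_val]
    rw [Fin.le_def, Fin.lt_def, Fin.le_def, Fin.lt_def]
    constructor
    · intro hu
      have := h.1 ⟨by omega, by omega⟩
      omega
    · intro hu
      have := h.2 ⟨by omega, by omega⟩
      omega
  · -- block-diagonal local kc implies same-side of all assembled arcs
    rintro ⟨i, a, b, hab, hj, hl⟩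
    intro x y hxy
    have hjval : j.val = c.sizeUpTo i + a.val := by rw [hj, emb_val]
    have hlval : l.val = c.sizeUpTo i + b.val := by rw [hl, emb_val]
    have ha' := a.isLt; have hb' := b.isLt
    rcases hxy with ⟨f1, f2⟩ | ⟨i', u, v, huv, hx, hy⟩
    · -- arc between two starts
      unfold isF at f1 f2
      rw [Fin.le_def, Fin.lt_def, Fin.le_def, Fin.lt_def]
      rcases stu_cases' c (c.index x) i with ⟨h, h'⟩ | h | h <;>
        rcases stu_cases' c (c.index y) i with ⟨h2, h2'⟩ | h2 | h2 <;> omega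
    · -- arc inside an interval
      have hxval : x.val = c.sizeUpTo i' + u.val := by rw [hx, emb_val]
      have hyval : y.val = c.sizeUpTo i' + v.val := by rw [hy, emb_val]
      have hu' := u.isLt; have hv' := v.isLt
      by_cases hii : i' = i
      · subst hii
        have hloc := hab u v huv
        rw [Fin.le_def, Fin.lt_def, Fin.le_def, Fin.lt_def] at hloc
        rw [Fin.le_def, Fin.lt_def, Fin.le_def, Fin.lt_def]
        omega
      · rcases stu_cases c i' i with h | h | h
        · exact absurd h hii
        · rw [Fin.le_def, Fin.lt_def, Fin.le_def, Fin.lt_def]; omega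
        · rw [Fin.le_def, Fin.lt_def, Fin.le_def, Fin.lt_def]; omega

def cls (s : Setoid (Fin n)) (x : Fin n) : Finset (Fin n) :=
  Finset.univ.filter fun j => s.r x j

lemma mem_cls {s : Setoid (Fin n)} {x y : Fin n} : y ∈ cls s x ↔ s.r x y := by
  simp [cls]

lemma self_mem_cls {s : Setoid (Fin n)} {x : Fin n} : x ∈ cls s x :=
  mem_cls.2 (s.iseqv.refl x)

lemma cls_eq {s : Setoid (Fin n)} {x y : Fin n} (h : s.r x y) : cls s x = cls s y := by
  ext z
  rw [mem_cls, mem_cls]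
  exact ⟨fun hz => s.iseqv.trans (s.iseqv.symm h) hz, fun hz => s.iseqv.trans h hz⟩

lemma blocksOf_eq (s : Setoid (Fin n)) : blocksOf s = Finset.univ.image (cls s) := rfl

lemma mem_blocksOf {s : Setoid (Fin n)} {B : Finset (Fin n)} :
    B ∈ blocksOf s ↔ ∃ x, cls s x = B := by
  rw [blocksOf_eq, Finset.mem_image]
  simp

lemma cls_bd_emb (T : ∀ i : Fin c.length, Setoid (Fin (c.blocksFun i))) (i : Fin c.length)
    (a : Fin (c.blocksFun i)) :
    cls (bd c T) (c.embedding i a) = (cls (T i) a).image (c.embedding i) := by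
  ext y
  rw [mem_cls, Finset.mem_image]
  constructor
  · rintro ⟨i', a', b', hab', hx', hy'⟩
    have hii : i' = i := emb_idx c hx'.symm
    subst hii
    have haa : a = a' := (c.embedding i').injective hx'
    exact ⟨b', mem_cls.2 (haa ▸ hab'), hy'.symm⟩
  · rintro ⟨b, hb, rfl⟩
    exact ⟨i, a, b, mem_cls.1 hb, rfl, rfl⟩

lemma cls_asm_emb_nz (hP : Prime c P) (i : Fin c.length) {a : Fin (c.blocksFun i)}
    (ha : a ≠ zer c i) :
    cls (asm c P hP) (c.embedding i a) = (cls (P i) a).image (c.embedding i) := by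
  ext y
  rw [mem_cls, Finset.mem_image]
  constructor
  · rintro (⟨h1, _⟩ | ⟨i', a', b', hab', hx', hy'⟩)
    · exact absurd ((isF_emb c).1 h1) ha
    · have hii : i' = i := emb_idx c hx'.symm
      subst hii
      have haa : a = a' := (c.embedding i').injective hx'
      exact ⟨b', mem_cls.2 (haa ▸ hab'), hy'.symm⟩
  · rintro ⟨b, hb, rfl⟩
    exact Or.inr ⟨i, a, b, mem_cls.1 hb, rfl, rfl⟩

def Vfin : Finset (Fin n) := Finset.univ.filter fun x => isF c x

lemma mem_Vfin {x : Fin n} : x ∈ Vfin c ↔ isF c x := by simp [Vfin]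

lemma cls_asm_isF (hP : Prime c P) {x : Fin n} (hx : isF c x) :
    cls (asm c P hP) x = Vfin c := by
  ext y
  rw [mem_cls, mem_Vfin]
  constructor
  · rintro (⟨_, h2⟩ | ⟨i, a, b, hab, hx', hy'⟩)
    · exact h2
    · have ha : a = zer c i := (isF_emb c).1 (hx' ▸ hx)
      have hb : b = zer c i := hP i b (ha ▸ hab)
      rw [hy', hb]
      exact isF_start c i
  · intro hy
    exact Or.inl ⟨hx, hy⟩

lemma card_Vfin : (Vfin c).card = c.length := by
  have himg : Vfin c = Finset.univ.image (fun i : Fin c.length => (c.embedding i (zer c i) : Fin n)) := by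
    ext x
    rw [mem_Vfin, Finset.mem_image]
    constructor
    · intro hx
      exact ⟨c.index x, Finset.mem_univ _, (isF_eq_start c hx).symm⟩
    · rintro ⟨i, _, rfl⟩
      exact isF_start c i
  rw [himg, Finset.card_image_of_injective _ (fun i i' h => emb_idx c h), Finset.card_univ,
    Fintype.card_fin]

lemma blocksOf_bd (T : ∀ i : Fin c.length, Setoid (Fin (c.blocksFun i))) :
    blocksOf (bd c T) = Finset.univ.biUnion
      (fun i => (blocksOf (T i)).image fun B => B.image (c.embedding i)) := by
  ext B
  rw [mem_blocksOf, Finset.mem_biUnion]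
  constructor
  · rintro ⟨x, rfl⟩
    refine ⟨c.index x, Finset.mem_univ _, ?_⟩
    rw [Finset.mem_image]
    refine ⟨cls (T (c.index x)) (c.invEmbedding x), mem_blocksOf.2 ⟨_, rfl⟩, ?_⟩
    rw [← cls_bd_emb, ← eq_emb_self]
  · rintro ⟨i, _, hB⟩
    rw [Finset.mem_image] at hB
    obtain ⟨B', hB', rfl⟩ := hB
    obtain ⟨a, rfl⟩ := mem_blocksOf.1 hB'
    exact ⟨c.embedding i a, (cls_bd_emb c T i a).symm ▸ rfl⟩

lemma disj_images {i j : Fin c.length} (hij : i ≠ j)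
    {S1 : Finset (Finset (Fin (c.blocksFun i)))} {S2 : Finset (Finset (Fin (c.blocksFun j)))}
    (h1 : ∀ B ∈ S1, B.Nonempty) :
    Disjoint (S1.image fun B => B.image (c.embedding i))
      (S2.image fun B => B.image (c.embedding j)) := by
  rw [Finset.disjoint_left]
  intro B hB1 hB2
  rw [Finset.mem_image] at hB1 hB2
  obtain ⟨B1, hB1m, rfl⟩ := hB1
  obtain ⟨B2, _, hEq⟩ := hB2
  obtain ⟨a, ha⟩ := h1 B1 hB1m
  have hmem : (c.embedding i a : Fin n) ∈ B2.image (c.embedding j) := by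
    rw [hEq]
    exact Finset.mem_image.2 ⟨a, ha, rfl⟩
  obtain ⟨b, _, hb⟩ := Finset.mem_image.1 hmem
  exact hij (emb_idx c hb).symm

lemma blocks_nonempty {m : ℕ} {s : Setoid (Fin m)} : ∀ B ∈ blocksOf s, B.Nonempty := by
  intro B hB
  obtain ⟨x, rfl⟩ := mem_blocksOf.1 hB
  exact ⟨x, self_mem_cls⟩

theorem fval_bd (f : ℕ → ℂ) (T : ∀ i : Fin c.length, Setoid (Fin (c.blocksFun i))) :
    fval f (bd c T) = ∏ i, fval f (T i) := by
  unfold fval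
  rw [blocksOf_bd, Finset.prod_biUnion (fun i _ j _ hij => disj_images c hij
    (fun B hB => blocks_nonempty B hB))]
  refine Finset.prod_congr rfl fun i _ => ?_
  rw [Finset.prod_image (fun B1 _ B2 _ h => Finset.image_injective (c.embedding i).injective h)]
  refine Finset.prod_congr rfl fun B _ => ?_
  rw [Finset.card_image_of_injective _ (c.embedding i).injective]

lemma cls_zer (hP : Prime c P) (i : Fin c.length) : cls (P i) (zer c i) = {zer c i} := by
  ext b
  rw [mem_cls, Finset.mem_singleton]
  exact ⟨fun h => hP i b h, fun h => h ▸ (P i).iseqv.refl _⟩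

lemma blocksOf_asm (hP : Prime c P) (hn : 0 < n) :
    blocksOf (asm c P hP) = insert (Vfin c) (Finset.univ.biUnion fun i =>
      ((blocksOf (P i)).erase (cls (P i) (zer c i))).image fun B => B.image (c.embedding i)) := by
  have hlen : 0 < c.length := c.length_pos_of_pos hn
  ext B
  rw [mem_blocksOf, Finset.mem_insert, Finset.mem_biUnion]
  constructor
  · rintro ⟨x, rfl⟩
    by_cases hx : isF c x
    · exact Or.inl (cls_asm_isF c P hP hx)
    · right
      have hxe := eq_emb_self c x
      have ha : c.invEmbedding x ≠ zer c (c.index x) := by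
        intro h
        rw [h] at hxe
        exact hx (hxe ▸ isF_start c (c.index x))
      refine ⟨c.index x, Finset.mem_univ _, Finset.mem_image.2
        ⟨cls (P (c.index x)) (c.invEmbedding x), ?_, ?_⟩⟩
      · refine Finset.mem_erase.2 ⟨?_, mem_blocksOf.2 ⟨_, rfl⟩⟩
        intro hcl
        have : c.invEmbedding x ∈ cls (P (c.index x)) (zer c (c.index x)) := hcl ▸ self_mem_cls
        rw [cls_zer c P hP, Finset.mem_singleton] at this
        exact ha this
      · rw [← cls_asm_emb_nz c P hP _ ha, ← hxe]
  · rintro (rfl | ⟨i, _, hB⟩)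
    · exact ⟨c.embedding ⟨0, hlen⟩ (zer c ⟨0, hlen⟩), cls_asm_isF c P hP (isF_start c _)⟩
    · rw [Finset.mem_image] at hB
      obtain ⟨B', hB', rfl⟩ := hB
      rw [Finset.mem_erase] at hB'
      obtain ⟨hne, hB'm⟩ := hB'
      obtain ⟨a, rfl⟩ := mem_blocksOf.1 hB'm
      have ha : a ≠ zer c i := by
        rintro rfl
        exact hne rfl
      exact ⟨c.embedding i a, cls_asm_emb_nz c P hP i ha⟩

theorem fval_asm (f : ℕ → ℂ) (hf : f 1 = 1) (hP : Prime c P) (hn : 0 < n) :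
    fval f (asm c P hP) = f c.length * ∏ i, fval f (P i) := by
  unfold fval
  have hnotmem : Vfin c ∉ Finset.univ.biUnion fun i =>
      ((blocksOf (P i)).erase (cls (P i) (zer c i))).image fun B => B.image (c.embedding i) := by
    intro hmem
    rw [Finset.mem_biUnion] at hmem
    obtain ⟨i, _, hB⟩ := hmem
    rw [Finset.mem_image] at hB
    obtain ⟨B', hB', hEq⟩ := hB
    rw [Finset.mem_erase] at hB'
    obtain ⟨hne, hB'm⟩ := hB'
    obtain ⟨a, ha⟩ := blocks_nonempty B' hB'm
    have haz : a ≠ zer c i := by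
      rintro rfl
      obtain ⟨x, rfl⟩ := mem_blocksOf.1 hB'm
      exact hne (cls_eq (mem_cls.1 ha))
    have : (c.embedding i a : Fin n) ∈ Vfin c := by
      rw [← hEq]
      exact Finset.mem_image.2 ⟨a, ha, rfl⟩
    exact haz ((isF_emb c).1 ((mem_Vfin c).1 this))
  rw [blocksOf_asm c P hP hn, Finset.prod_insert hnotmem, card_Vfin]
  congr 1
  rw [Finset.prod_biUnion (fun i _ j _ hij => disj_images c hij
    (fun B hB => blocks_nonempty B (Finset.mem_of_mem_erase hB)))]
  refine Finset.prod_congr rfl fun i _ => ?_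
  rw [Finset.prod_image (fun B1 _ B2 _ h => Finset.image_injective (c.embedding i).injective h)]
  have hstep : ∏ B ∈ (blocksOf (P i)).erase (cls (P i) (zer c i)),
      f ((B.image (c.embedding i)).card) = ∏ B ∈ (blocksOf (P i)).erase (cls (P i) (zer c i)),
      f B.card := by
    refine Finset.prod_congr rfl fun B _ => ?_
    rw [Finset.card_image_of_injective _ (c.embedding i).injective]
  rw [hstep]
  have hz : cls (P i) (zer c i) ∈ blocksOf (P i) := mem_blocksOf.2 ⟨_, rfl⟩
  have hmul := Finset.mul_prod_erase (blocksOf (P i)) (fun B => f B.card) hz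
  have hcard : (cls (P i) (zer c i)).card = 1 := by
    rw [cls_zer c P hP]
    exact Finset.card_singleton _
  rw [← hmul]
  show _ = f (cls (P i) (zer c i)).card * _
  rw [hcard, hf, one_mul]

lemma isF_iff_boundaries {x : Fin n} : isF c x ↔ x.castSucc ∈ c.boundaries := by
  unfold Composition.boundaries
  rw [Finset.mem_map]
  constructor
  · intro hx
    refine ⟨(c.index x).castSucc, Finset.mem_univ _, ?_⟩
    apply Fin.ext
    show c.sizeUpTo ((c.index x).castSucc) = x.val
    rw [Fin.coe_castSucc]
    exact hx.symm
  · rintro ⟨i, _, hi⟩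
    have hi' : c.sizeUpTo i.val = x.val := by
      have := congrArg Fin.val hi
      exact this
    have hlt : i.val < c.length := by
      by_contra h
      have : c.sizeUpTo i.val = n := c.sizeUpTo_ofLength_le _ (by omega)
      have := x.isLt
      omega
    have e1 : c.sizeUpTo ((⟨i.val, hlt⟩ : Fin c.length) : ℕ) = c.sizeUpTo i.val := rfl
    have hidx : c.index x = ⟨i.val, hlt⟩ := by
      apply index_of_mem
      · show c.sizeUpTo (⟨i.val, hlt⟩ : Fin c.length) ≤ x.val
        omega
      · show x.val < c.sizeUpTo (⟨i.val, hlt⟩ : Fin c.length) + c.blocksFun ⟨i.val, hlt⟩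
        have := c.one_le_blocksFun ⟨i.val, hlt⟩
        omega
    show x.val = c.sizeUpTo (c.index x)
    rw [hidx]
    omega

lemma boundaries_eq_Vfin : c.boundaries = (Vfin c).image Fin.castSucc ∪ {Fin.last n} := by
  ext b
  rw [Finset.mem_union, Finset.mem_image, Finset.mem_singleton]
  constructor
  · intro hb
    unfold Composition.boundaries at hb
    rw [Finset.mem_map] at hb
    obtain ⟨i, _, rfl⟩ := hb
    by_cases hi : i.val = c.length
    · right
      have : i = Fin.last c.length := Fin.ext hi
      rw [this]
      exact c.boundary_last
    · left
      have hlt : i.val < c.length := by have := i.isLt; omega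
      have hvlt : c.sizeUpTo i.val < n := by
        have h1 := c.sizeUpTo_strict_mono hlt
        have h2 : c.sizeUpTo (i.val + 1) ≤ c.sizeUpTo c.length := c.monotone_sizeUpTo (by omega)
        rw [c.sizeUpTo_length] at h2
        omega
      have e1 : c.sizeUpTo ((⟨i.val, hlt⟩ : Fin c.length) : ℕ) = c.sizeUpTo i.val := rfl
      refine ⟨⟨c.sizeUpTo i.val, hvlt⟩, ?_, ?_⟩
      · rw [mem_Vfin]
        show (⟨c.sizeUpTo i.val, hvlt⟩ : Fin n).val = c.sizeUpTo (c.index _)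
        rw [index_of_mem c (i := ⟨i.val, hlt⟩)
          (by show c.sizeUpTo _ ≤ (⟨c.sizeUpTo i.val, hvlt⟩ : Fin n).val
              have : ((⟨c.sizeUpTo i.val, hvlt⟩ : Fin n)).val = c.sizeUpTo i.val := rfl
              omega)
          (by have := c.one_le_blocksFun ⟨i.val, hlt⟩
              have : ((⟨c.sizeUpTo i.val, hvlt⟩ : Fin n)).val = c.sizeUpTo i.val := rfl
              omega)]
      · apply Fin.ext
        show c.sizeUpTo i.val = c.sizeUpTo i.val
        rfl
  · rintro (⟨x, hx, rfl⟩ | rfl)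
    · exact (isF_iff_boundaries c).1 ((mem_Vfin c).1 hx)
    · rw [← c.boundary_last]
      unfold Composition.boundaries
      rw [Finset.mem_map]
      exact ⟨Fin.last c.length, Finset.mem_univ _, rfl⟩

lemma comp_ext_boundaries {c1 c2 : Composition n} (h : c1.boundaries = c2.boundaries) :
    c1 = c2 := by
  apply (compositionEquiv n).injective
  show c1.toCompositionAsSet = c2.toCompositionAsSet
  apply CompositionAsSet.ext
  rw [c1.toCompositionAsSet_boundaries, c2.toCompositionAsSet_boundaries]
  exact h

lemma isF_zero (hn : 0 < n) : isF c ⟨0, hn⟩ := by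
  have h1 := x_lb c ⟨0, hn⟩
  have h2 : (⟨0, hn⟩ : Fin n).val = 0 := rfl
  show (⟨0, hn⟩ : Fin n).val = _
  omega

section Disasm

variable (s : Setoid (Fin n)) (hn : 0 < n)

/-- The composition of `n` determined by the block of `0` in `s`. -/
def compOf : Composition n :=
  CompositionAsSet.toComposition
    { boundaries := (cls s ⟨0, hn⟩).image Fin.castSucc ∪ {Fin.last n}
      zero_mem := by
        rw [Finset.mem_union, Finset.mem_image]
        exact Or.inl ⟨⟨0, hn⟩, self_mem_cls, rfl⟩
      getLast_mem := by
        rw [Finset.mem_union, Finset.mem_singleton]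
        exact Or.inr rfl }

lemma compOf_boundaries :
    (compOf s hn).boundaries = (cls s ⟨0, hn⟩).image Fin.castSucc ∪ {Fin.last n} :=
  CompositionAsSet.toComposition_boundaries _

lemma isF_compOf {x : Fin n} : isF (compOf s hn) x ↔ s.r ⟨0, hn⟩ x := by
  rw [isF_iff_boundaries, compOf_boundaries, Finset.mem_union, Finset.mem_image,
    Finset.mem_singleton]
  constructor
  · rintro (⟨v, hv, hvx⟩ | hlast)
    · have : v = x := Fin.castSucc_injective n hvx
      exact this ▸ mem_cls.1 hv
    · exfalso
      have := congrArg Fin.val hlast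
      have hx := x.isLt
      simp only [Fin.coe_castSucc, Fin.val_last] at this
      omega
  · intro h
    exact Or.inl ⟨x, mem_cls.2 h, rfl⟩

lemma comap_isNC {m : ℕ} (e : Fin m → Fin n) (he : ∀ a b : Fin m, a < b → e a < e b)
    (hs : IsNC s) : IsNC (Setoid.comap e s) := by
  intro a b c' d hab hbc hcd hac hbd
  have hab' : ((a.val : ℤ)) < b.val := hab
  have hbc' : ((b.val : ℤ)) < c'.val := hbc
  have hcd' : ((c'.val : ℤ)) < d.val := hcd
  refine hs (e a) (e b) (e c') (e d) ?_ ?_ ?_ hac hbd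
  · show ((e a).val : ℤ) < ((e b).val : ℤ)
    have := Fin.lt_def.1 (he a b (by rw [Fin.lt_def]; omega))
    omega
  · show ((e b).val : ℤ) < ((e c').val : ℤ)
    have := Fin.lt_def.1 (he b c' (by rw [Fin.lt_def]; omega))
    omega
  · show ((e c').val : ℤ) < ((e d).val : ℤ)
    have := Fin.lt_def.1 (he c' d (by rw [Fin.lt_def]; omega))
    omega

/-- The local partitions obtained by restricting `s` to the intervals of `compOf s`. -/
def locOf (i : Fin (compOf s hn).length) : Setoid (Fin ((compOf s hn).blocksFun i)) :=
  Setoid.comap ((compOf s hn).embedding i) s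

lemma locOf_prime : Prime (compOf s hn) (locOf s hn) := by
  intro i b hb
  have h1 : s.r ((compOf s hn).embedding i (zer _ i)) ((compOf s hn).embedding i b) := hb
  have h2 : s.r ⟨0, hn⟩ ((compOf s hn).embedding i (zer _ i)) :=
    (isF_compOf s hn).1 (isF_start _ i)
  have h3 : s.r ⟨0, hn⟩ ((compOf s hn).embedding i b) := s.iseqv.trans h2 h1
  have h4 : isF (compOf s hn) ((compOf s hn).embedding i b) := (isF_compOf s hn).2 h3
  exact (isF_emb _).1 h4

lemma locOf_isNC (hs : IsNC s) (i : Fin (compOf s hn).length) : IsNC (locOf s hn i) := by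
  apply comap_isNC s _ _ hs
  intro a b hab
  rw [Fin.lt_def, emb_val, emb_val]
  have := Fin.lt_def.1 hab
  omega

lemma index_eq_of_rel (hs : IsNC s) {x y : Fin n} (hxy : s.r x y) (h0 : ¬ s.r ⟨0, hn⟩ x) :
    (compOf s hn).index x ≤ (compOf s hn).index y := by
  set c' := compOf s hn with hc'
  by_contra hcon
  push_neg at hcon
  -- the start of interval (index x) lies strictly between y and x (or equals x)
  set v : Fin n := c'.embedding (c'.index x) (zer c' (c'.index x)) with hv
  have hvval : v.val = c'.sizeUpTo (c'.index x) := by rw [hv, emb_val]; rfl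
  have hvmem : s.r ⟨0, hn⟩ v := (isF_compOf s hn).1 (isF_start c' _)
  have hyv : y.val < v.val := by
    have h1 := x_ub c' y
    have h2 : c'.sizeUpTo (c'.index y) + c'.blocksFun (c'.index y) ≤ c'.sizeUpTo (c'.index x) := by
      rw [← c'.sizeUpTo_succ' (c'.index y)]
      exact c'.monotone_sizeUpTo (by exact_mod_cast hcon)
    omega
  have hvx : v.val ≤ x.val := by
    have := x_lb c' x
    omega
  have h0y : ¬ s.r ⟨0, hn⟩ y := fun h => h0 (s.iseqv.trans h (s.iseqv.symm hxy))
  rcases eq_or_lt_of_le hvx with heq | hlt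
  · exact h0 (Fin.ext heq ▸ hvmem)
  · have hy0 : 0 < y.val := by
      rcases Nat.eq_zero_or_pos y.val with h | h
      · exfalso
        apply h0y
        have : y = ⟨0, hn⟩ := Fin.ext h
        rw [this]
      · exact h
    have := hs ⟨0, hn⟩ y v x
      (by show ((0 : ℕ) : ℤ) < y.val; push_cast; omega)
      (by show ((y.val : ℕ) : ℤ) < v.val; push_cast; omega)
      (by show ((v.val : ℕ) : ℤ) < x.val; push_cast; omega)
      hvmem (s.iseqv.symm hxy)
    exact h0y this

lemma asm_recover (hs : IsNC s) : asm (compOf s hn) (locOf s hn) (locOf_prime s hn) = s := by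
  apply Setoid.ext
  intro x y
  constructor
  · rintro (⟨h1, h2⟩ | ⟨i, a, b, hab, rfl, rfl⟩)
    · exact s.iseqv.trans (s.iseqv.symm ((isF_compOf s hn).1 h1)) ((isF_compOf s hn).1 h2)
    · exact hab
  · intro hxy
    by_cases h0 : s.r ⟨0, hn⟩ x
    · exact Or.inl ⟨(isF_compOf s hn).2 h0, (isF_compOf s hn).2 (s.iseqv.trans h0 hxy)⟩
    · have h0y : ¬ s.r ⟨0, hn⟩ y := fun h => h0 (s.iseqv.trans h (s.iseqv.symm hxy))
      have hle1 := index_eq_of_rel s hn hs hxy h0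
      have hle2 := index_eq_of_rel s hn hs (s.iseqv.symm hxy) h0y
      have hidx : (compOf s hn).index y = (compOf s hn).index x := le_antisymm hle2 hle1
      obtain ⟨b, hb⟩ : y ∈ Set.range ((compOf s hn).embedding ((compOf s hn).index x)) := by
        rw [Composition.mem_range_embedding_iff']
        exact hidx.symm
      refine Or.inr ⟨(compOf s hn).index x, (compOf s hn).invEmbedding x, b, ?_,
        eq_emb_self _ x, hb.symm⟩
      show s.r ((compOf s hn).embedding _ ((compOf s hn).invEmbedding x))
        ((compOf s hn).embedding _ b)
      rw [← eq_emb_self, hb]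
      exact hxy

end Disasm

section RoundTrip

lemma cls_asm_zero (hP : Prime c P) (hn : 0 < n) :
    cls (asm c P hP) ⟨0, hn⟩ = Vfin c := cls_asm_isF c P hP (isF_zero c hn)

lemma compOf_asm (hP : Prime c P) (hn : 0 < n) :
    compOf (asm c P hP) hn = c := by
  apply comp_ext_boundaries
  rw [compOf_boundaries, cls_asm_zero c P hP hn, boundaries_eq_Vfin]

lemma locOf_asm (hP : Prime c P) (hn : 0 < n) (i : Fin c.length)
    (a b : Fin (c.blocksFun i)) :
    (Setoid.comap (c.embedding i) (asm c P hP)).r a b ↔ (P i).r a b := by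
  constructor
  · rintro (⟨h1, h2⟩ | ⟨i', a', b', hab', hx', hy'⟩)
    · have ha : a = zer c i := (isF_emb c).1 h1
      have hb : b = zer c i := (isF_emb c).1 h2
      rw [ha, hb]
    · have hii : i' = i := emb_idx c hx'.symm
      subst hii
      have haa : a = a' := (c.embedding i').injective hx'
      have hbb : b = b' := (c.embedding i').injective hy'
      rw [haa, hbb]
      exact hab'
  · intro h
    exact Or.inr ⟨i, a, b, h, rfl, rfl⟩

end RoundTrip

end NS2

namespace NS3
open NS NS2

lemma pinch_pos (f g : ℕ → ℂ) {M : ℕ} (hM : 0 < M) :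
    pinchSeq f g M = ∑ s ∈ Finset.univ.filter (fun s : Setoid (Fin M) => IsNCPrime hM s),
      fval f s * fval g (kreweras s) := by
  obtain ⟨k, rfl⟩ : ∃ k, M = k + 1 := ⟨M - 1, by omega⟩
  rw [Finset.sum_subtype (p := fun s : Setoid (Fin (k + 1)) => IsNCPrime hM s) _
    (fun x => by simp) (fun s => fval f s * fval g (kreweras s))]
  rfl

lemma coeff_phi (h : ℕ → ℂ) (j : ℕ) :
    PowerSeries.coeff j (phiSeries h) = if j = 0 then 0 else h j :=
  PowerSeries.coeff_mk _ _

lemma phi_pinch_eq_mk (f g : ℕ → ℂ) :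
    phiSeries (pinchSeq f g) = PowerSeries.mk (pinchSeq f g) := by
  apply PowerSeries.ext
  intro j
  rw [PowerSeries.coeff_mk, coeff_phi]
  rcases Nat.eq_zero_or_pos j with h | h
  · subst h; simp [pinchSeq]
  · rw [if_neg (by omega)]

def compMk (m k : ℕ) (l : ℕ →₀ ℕ) (hsum : (Finset.range k).sum l = m + 1)
    (hpos : ∀ i ∈ Finset.range k, 0 < l i) : Composition (m + 1) where
  blocks := List.ofFn fun i : Fin k => l i.val
  blocks_pos := by
    intro i hi
    rw [List.mem_ofFn] at hi
    obtain ⟨j, rfl⟩ := hi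
    exact hpos j.val (Finset.mem_range.2 j.isLt)
  blocks_sum := by
    rw [List.sum_ofFn]
    rw [Fin.sum_univ_eq_sum_range (fun i => l i) k]
    exact hsum

lemma compMk_blocks (m k : ℕ) (l : ℕ →₀ ℕ) (hsum) (hpos) :
    (compMk m k l hsum hpos).blocks = List.ofFn fun i : Fin k => l i.val := rfl

lemma compMk_length (m k : ℕ) (l : ℕ →₀ ℕ) (hsum) (hpos) :
    (compMk m k l hsum hpos).length = k := by
  show (compMk m k l hsum hpos).blocks.length = k
  rw [compMk_blocks, List.length_ofFn]

lemma compMk_blocksFun (m k : ℕ) (l : ℕ →₀ ℕ) (hsum) (hpos)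
    (i : Fin (compMk m k l hsum hpos).length) :
    (compMk m k l hsum hpos).blocksFun i = l i.val := by
  rcases i with ⟨iv, hiv⟩
  show (List.ofFn fun j : Fin k => l j.val).get ⟨iv, hiv⟩ = l iv
  rw [List.get_ofFn]
  rfl

lemma sum_pow_eq_comp (f : ℕ → ℂ) (p : ℕ → ℂ) (hp0 : p 0 = 0) (m : ℕ) :
    ∑ k ∈ Finset.range (m + 2), ((if k = 0 then (0 : ℂ) else f k) *
      ∑ l ∈ Finset.finsuppAntidiag (Finset.range k) (m + 1), ∏ i ∈ Finset.range k, p (l i))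
    = ∑ c : Composition (m + 1), f c.length * ∏ i : Fin c.length, p (c.blocksFun i) := by
  have step1 : ∀ k ∈ Finset.range (m + 2), (if k = 0 then (0 : ℂ) else f k) *
      (∑ l ∈ Finset.finsuppAntidiag (Finset.range k) (m + 1), ∏ i ∈ Finset.range k, p (l i))
      = ∑ l ∈ Finset.finsuppAntidiag (Finset.range k) (m + 1),
        (if k = 0 then (0 : ℂ) else f k) * ∏ i ∈ Finset.range k, p (l i) :=
    fun k _ => Finset.mul_sum _ _ _
  rw [Finset.sum_congr rfl step1, Finset.sum_sigma' (Finset.range (m + 2))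
    (fun k => Finset.finsuppAntidiag (Finset.range k) (m + 1))
    (fun k l => (if k = 0 then (0 : ℂ) else f k) * ∏ i ∈ Finset.range k, p (l i))]
  rw [← Finset.sum_filter_of_ne (p := fun x : Σ _ : ℕ, (ℕ →₀ ℕ) =>
    ∀ i ∈ Finset.range x.1, 0 < x.2 i) (by
      intro x hx hne
      intro i hi
      by_contra hc
      apply hne
      have hz : x.2 i = 0 := by omega
      rw [Finset.prod_eq_zero hi (by rw [hz]; exact hp0)]
      ring)]
  refine Finset.sum_bij'
    (fun x hx => compMk m x.1 x.2
      (Finset.mem_finsuppAntidiag.1 ((Finset.mem_sigma.1 (Finset.mem_filter.1 hx).1).2)).1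
      (Finset.mem_filter.1 hx).2)
    (fun c _ => ⟨c.length, Finsupp.onFinset (Finset.range c.length)
      (fun i => if h : i < c.length then c.blocksFun ⟨i, h⟩ else 0) (fun i hi => by
        rw [Finset.mem_range]
        by_contra hc
        have hi2 : (if h : i < c.length then c.blocksFun ⟨i, h⟩ else 0) ≠ 0 := hi
        rw [dif_neg hc] at hi2
        exact hi2 rfl)⟩)
    (fun x hx => Finset.mem_univ _) ?_ ?_ ?_ ?_
  · -- backward map lands in the filtered set
    intro c _
    rw [Finset.mem_filter, Finset.mem_sigma]
    refine ⟨⟨Finset.mem_range.2 (by show c.length < m + 2; have := c.length_le; omega), ?_⟩, ?_⟩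
    · rw [Finset.mem_finsuppAntidiag]
      constructor
      · show (∑ i ∈ Finset.range c.length,
          (if h : i < c.length then c.blocksFun ⟨i, h⟩ else 0)) = m + 1
        rw [← Fin.sum_univ_eq_sum_range
          (fun i => if h : i < c.length then c.blocksFun ⟨i, h⟩ else 0) c.length]
        rw [Finset.sum_congr rfl (fun i _ => dif_pos i.isLt)]
        exact c.sum_blocksFun
      · intro i hi
        rw [Finset.mem_range]
        by_contra hc
        have hi2 : (if h : i < c.length then c.blocksFun ⟨i, h⟩ else 0) ≠ 0 :=
          Finsupp.mem_support_iff.1 hi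
        rw [dif_neg hc] at hi2
        exact hi2 rfl
    · intro i hi
      show 0 < if h : i < c.length then c.blocksFun ⟨i, h⟩ else 0
      rw [dif_pos (Finset.mem_range.1 hi)]
      exact c.one_le_blocksFun _
  · -- left inverse
    intro x hx
    have hx' := hx
    rw [Finset.mem_filter, Finset.mem_sigma] at hx'
    obtain ⟨⟨hk, hl⟩, hposx⟩ := hx'
    set c' := compMk m x.1 x.2
      (Finset.mem_finsuppAntidiag.1 ((Finset.mem_sigma.1 (Finset.mem_filter.1 hx).1).2)).1
      (Finset.mem_filter.1 hx).2 with hc'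
    have hlen : c'.length = x.1 := compMk_length _ _ _ _ _
    refine Sigma.ext hlen ?_
    rw [heq_eq_eq]
    apply Finsupp.ext
    intro i
    rw [Finsupp.onFinset_apply]
    by_cases hik : i < x.1
    · rw [dif_pos (show i < c'.length by omega)]
      rw [compMk_blocksFun]
    · rw [dif_neg (show ¬ i < c'.length by omega)]
      symm
      rw [← Finsupp.notMem_support_iff]
      intro hmem
      have := (Finset.mem_finsuppAntidiag.1 hl).2 hmem
      rw [Finset.mem_range] at this
      omega
  · -- right inverse
    intro c _
    apply Composition.ext
    rw [compMk_blocks]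
    apply List.ext_get
    · rw [List.length_ofFn]
    · intro i h1 h2
      rw [List.get_ofFn]
      rw [Finsupp.onFinset_apply]
      have hi : i < c.length := by
        rw [List.length_ofFn] at h1
        exact h1
      rw [dif_pos (show ((Fin.cast List.length_ofFn ⟨i, h1⟩ : Fin c.length) : ℕ)
        < c.length from hi)]
      rfl
  · -- values agree
    intro x hx
    have hx' := hx
    rw [Finset.mem_filter, Finset.mem_sigma] at hx'
    obtain ⟨⟨hk, hl⟩, hposx⟩ := hx'
    set c' := compMk m x.1 x.2
      (Finset.mem_finsuppAntidiag.1 ((Finset.mem_sigma.1 (Finset.mem_filter.1 hx).1).2)).1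
      (Finset.mem_filter.1 hx).2 with hc'
    have hlen : c'.length = x.1 := compMk_length _ _ _ _ _
    have hk0 : x.1 ≠ 0 := by
      intro h
      have := (Finset.mem_finsuppAntidiag.1 hl).1
      rw [h] at this
      simp at this
    rw [if_neg hk0]
    have h2 : (∏ i : Fin c'.length, p (c'.blocksFun i)) = ∏ i ∈ Finset.range x.1, p (x.2 i) := by
      have e1 : ∀ i : Fin c'.length, p (c'.blocksFun i) = p (x.2 i.val) := fun i => by
        rw [compMk_blocksFun]
      rw [Finset.prod_congr rfl (fun i _ => e1 i),
        Fin.prod_univ_eq_prod_range (fun i => p (x.2 i)) c'.length, hlen]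
    rw [h2, hlen]

end NS3

namespace NS4
open NS NS2 NS3

lemma setoid_heq {m1 m2 : ℕ} (h : m1 = m2) {s1 : Setoid (Fin m1)} {s2 : Setoid (Fin m2)}
    (hr : ∀ (a b : Fin m1) (a' b' : Fin m2), (a : ℕ) = a' → (b : ℕ) = b' →
      (s1.r a b ↔ s2.r a' b')) : HEq s1 s2 := by
  subst h
  rw [heq_eq_eq]
  exact Setoid.ext fun a b => hr a b a b rfl rfl

lemma pi_heq {n : ℕ} {c1 c2 : Composition n} (h : c1 = c2)
    (P1 : ∀ i : Fin c1.length, Setoid (Fin (c1.blocksFun i)))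
    (P2 : ∀ i : Fin c2.length, Setoid (Fin (c2.blocksFun i)))
    (hw : ∀ (i : Fin c1.length) (j : Fin c2.length), (i : ℕ) = (j : ℕ) → HEq (P1 i) (P2 j)) :
    HEq P1 P2 := by
  subst h
  rw [heq_eq_eq]
  funext i
  exact eq_of_heq (hw i i rfl)

lemma weight_asm (f g : ℕ → ℂ) {n : ℕ} (hn : 0 < n) (c : Composition n)
    (P : ∀ i : Fin c.length, Setoid (Fin (c.blocksFun i))) (hP : Prime c P)
    (hNC : ∀ i, IsNC (P i)) (hf : f 1 = 1) :
    fval f (asm c P hP) * fval g (kreweras (asm c P hP))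
      = f c.length * ∏ i, (fval f (P i) * fval g (kreweras (P i))) := by
  rw [kreweras_eq_kc (asm_isNC c P hP hNC), kc_asm c P hn hP, fval_asm c P f hf hP hn,
    fval_bd]
  have e : (∏ i, (fval f (P i) * fval g (kreweras (P i))))
      = ∏ i, (fval f (P i) * fval g (kc (P i))) :=
    Finset.prod_congr rfl fun i _ => by rw [kreweras_eq_kc (hNC i)]
  rw [e, Finset.prod_mul_distrib]
  ring

theorem conv_eq (f g : ℕ → ℂ) (hf : f 1 = 1) (m : ℕ) :
    (∑ c : Composition (m + 1), f c.length * ∏ i : Fin c.length, pinchSeq f g (c.blocksFun i))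
      = convSeq f g (m + 1) := by
  have hn : 0 < m + 1 := Nat.succ_pos m
  have step1 : (∑ c : Composition (m + 1),
        f c.length * ∏ i : Fin c.length, pinchSeq f g (c.blocksFun i))
      = ∑ c : Composition (m + 1), ∑ Pf ∈ Fintype.piFinset (fun i : Fin c.length =>
          Finset.univ.filter (fun s : Setoid (Fin (c.blocksFun i)) =>
            IsNCPrime (c.one_le_blocksFun i) s)),
          f c.length * ∏ i, (fval f (Pf i) * fval g (kreweras (Pf i))) := by
    refine Finset.sum_congr rfl fun c _ => ?_
    rw [Finset.prod_congr rfl (fun i _ => pinch_pos f g (c.one_le_blocksFun i)),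
      Finset.prod_univ_sum, Finset.mul_sum]
  rw [step1, Finset.sum_sigma' (Finset.univ : Finset (Composition (m + 1)))
    (fun c => Fintype.piFinset (fun i : Fin c.length =>
      Finset.univ.filter (fun s : Setoid (Fin (c.blocksFun i)) =>
        IsNCPrime (c.one_le_blocksFun i) s)))
    (fun c Pf => f c.length * ∏ i, (fval f (Pf i) * fval g (kreweras (Pf i))))]
  show _ = ∑ π : {s : Setoid (Fin (m + 1)) // IsNC s}, fval f π.1 * fval g (kreweras π.1)
  have hmem : ∀ (x : Σ c : Composition (m + 1),
        ∀ i : Fin c.length, Setoid (Fin (c.blocksFun i))),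
      x ∈ (Finset.univ : Finset (Composition (m + 1))).sigma (fun c => Fintype.piFinset
        (fun i : Fin c.length => Finset.univ.filter
          (fun s : Setoid (Fin (c.blocksFun i)) => IsNCPrime (c.one_le_blocksFun i) s))) →
      Prime x.1 (fun i => x.2 i) ∧ (∀ i, IsNC (x.2 i)) := by
    intro x hx
    rw [Finset.mem_sigma] at hx
    have h2 := hx.2
    rw [Fintype.mem_piFinset] at h2
    constructor
    · intro i b hb
      exact ((Finset.mem_filter.1 (h2 i)).2).2 b hb
    · intro i
      exact ((Finset.mem_filter.1 (h2 i)).2).1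
  refine Finset.sum_bij'
    (fun x hx => (⟨asm x.1 (fun i => x.2 i) (hmem x hx).1,
      asm_isNC x.1 (fun i => x.2 i) (hmem x hx).1 (hmem x hx).2⟩ : {s : Setoid (Fin (m + 1)) // IsNC s}))
    (fun π _ => ⟨compOf π.1 hn, fun i => locOf π.1 hn i⟩)
    (fun x hx => Finset.mem_univ _) ?_ ?_ ?_ ?_
  · -- backward membership
    intro π _
    rw [Finset.mem_sigma]
    refine ⟨Finset.mem_univ _, ?_⟩
    rw [Fintype.mem_piFinset]
    intro i
    rw [Finset.mem_filter]
    exact ⟨Finset.mem_univ _, locOf_isNC π.1 hn π.2 i, fun b hb => locOf_prime π.1 hn i b hb⟩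
  · -- left inverse
    intro x hx
    obtain ⟨c, Pf⟩ := x
    have hP' := (hmem ⟨c, Pf⟩ hx).1
    have hco : compOf (asm c (fun i => Pf i) hP') hn = c := compOf_asm c (fun i => Pf i) hP' hn
    refine Sigma.ext hco (pi_heq hco _ _ ?_)
    intro i j hij
    refine setoid_heq (Composition.blocksFun_congr _ c i j rfl (by rw [hco]) hij) ?_
    intro a b a' b' ha hb
    have ea : (((compOf (asm c (fun i => Pf i) hP') hn).embedding i a) : Fin (m + 1))
        = c.embedding j a' := by
      apply Fin.ext
      rw [emb_val, emb_val]
      have hsz : (compOf (asm c (fun i => Pf i) hP') hn).sizeUpTo i.val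
          = c.sizeUpTo i.val := congrArg (fun d => Composition.sizeUpTo d i.val) hco
      have hsz2 : c.sizeUpTo i.val = c.sizeUpTo j.val := by rw [hij]
      omega
    have eb : (((compOf (asm c (fun i => Pf i) hP') hn).embedding i b) : Fin (m + 1))
        = c.embedding j b' := by
      apply Fin.ext
      rw [emb_val, emb_val]
      have hsz : (compOf (asm c (fun i => Pf i) hP') hn).sizeUpTo i.val
          = c.sizeUpTo i.val := congrArg (fun d => Composition.sizeUpTo d i.val) hco
      have hsz2 : c.sizeUpTo i.val = c.sizeUpTo j.val := by rw [hij]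
      omega
    show (asm c (fun i => Pf i) hP').r ((compOf (asm c (fun i => Pf i) hP') hn).embedding i a)
      ((compOf (asm c (fun i => Pf i) hP') hn).embedding i b) ↔ (Pf j).r a' b'
    rw [ea, eb]
    exact locOf_asm c (fun i => Pf i) hP' hn j a' b'
  · -- right inverse
    intro π hπ
    exact Subtype.ext (asm_recover π.1 hn π.2)
  · -- values
    intro x hx
    exact (weight_asm f g hn x.1 (fun i => x.2 i) (hmem x hx).1 (hmem x hx).2 hf).symm

end NS4

/-- For `f, g ∈ M₁` (multiplicative functions with
`f(0₁,1₁) = g(0₁,1₁) = 1`), the pinched convolution `f ⋆̌ g`, defined by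
`(f ⋆̌ g)(0_n,1_n) = Σ_{π ∈ NC'(n)} f(0_n, π) g(0_n, K(π))`, satisfies
`φ_f(φ_{f ⋆̌ g}(z)) = φ_{f ∗ g}(z)`, where `φ_h(z) = Σ_{n≥1} h(0_n,1_n) zⁿ`. -/
theorem phi_comp_pinched_eq_phi_conv (f g : ℕ → ℂ) (hf : f 1 = 1) (hg : g 1 = 1) :
    pscomp (phiSeries f) (phiSeries (pinchSeq f g)) = phiSeries (convSeq f g) := by
  apply PowerSeries.ext
  intro n
  have hL : PowerSeries.coeff n (pscomp (phiSeries f) (phiSeries (pinchSeq f g)))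
      = ∑ k ∈ Finset.range (n + 1), (PowerSeries.coeff k (phiSeries f)) *
          PowerSeries.coeff n ((phiSeries (pinchSeq f g)) ^ k) := PowerSeries.coeff_mk _ _
  rw [hL, NS3.coeff_phi]
  cases n with
  | zero =>
    rw [if_pos rfl]
    simp [NS3.coeff_phi]
  | succ m =>
    rw [if_neg (Nat.succ_ne_zero m), NS3.phi_pinch_eq_mk]
    have e1 : ∀ k ∈ Finset.range (m + 1 + 1), PowerSeries.coeff k (phiSeries f) *
        PowerSeries.coeff (m + 1) ((PowerSeries.mk (pinchSeq f g)) ^ k)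
        = (if k = 0 then (0 : ℂ) else f k) *
          ∑ l ∈ Finset.finsuppAntidiag (Finset.range k) (m + 1),
            ∏ i ∈ Finset.range k, pinchSeq f g (l i) := by
      intro k _
      rw [NS3.coeff_phi, PowerSeries.coeff_pow]
      congr 1
      refine Finset.sum_congr rfl fun l _ => Finset.prod_congr rfl fun i _ => ?_
      rw [PowerSeries.coeff_mk]
    rw [Finset.sum_congr rfl e1]
    rw [show (m + 1 + 1) = m + 2 from rfl]
    rw [NS3.sum_pow_eq_comp f (pinchSeq f g) rfl m, NS4.conv_eq f g hf m]

end
end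

section
/- If a, b ∈ A satisfy φ(a^n b^m) = φ(a^n)φ(b^m) for all n, m ≥ 0, φ(b) ≠ 0, then all mixed (ℓ,r)-cumulants κ_{n,m}(a,b) with n, m ≥ 1 vanish, hence K_{a,b}(z,w) = 0 and T_{a,b}(z,w) = 1. -/
open scoped Classical
noncomputable section

def mvMk (f : (Fin 2 →₀ ℕ) → ℂ) : MvPowerSeries (Fin 2) ℂ := f

/-- Formal substitution `F(g₀, g₁)` of two series (with zero constant coefficient)
into a two-variable formal power series `F`. -/
def mvcomp (F : MvPowerSeries (Fin 2) ℂ) (g0 g1 : MvPowerSeries (Fin 2) ℂ) :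
    MvPowerSeries (Fin 2) ℂ :=
  mvMk fun d => ∑ p ∈ Finset.range (d 0 + d 1 + 1) ×ˢ Finset.range (d 0 + d 1 + 1),
    (MvPowerSeries.coeff (Finsupp.single 0 p.1 + Finsupp.single 1 p.2) F) *
      MvPowerSeries.coeff d (g0 ^ p.1 * g1 ^ p.2)

/-- A one-variable power series `p(z)` viewed as the two-variable series `p(z)`. -/
def toMv0 (p : PowerSeries ℂ) : MvPowerSeries (Fin 2) ℂ :=
  mvMk fun d => if d 1 = 0 then PowerSeries.coeff (d 0) p else 0

/-- A one-variable power series `p(w)` viewed as the two-variable series `p(w)`. -/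
def toMv1 (p : PowerSeries ℂ) : MvPowerSeries (Fin 2) ℂ :=
  mvMk fun d => if d 0 = 0 then PowerSeries.coeff (d 1) p else 0

/-- The position key inducing the bi-non-crossing order determined by
`χ : {1,…,m} → {ℓ,r}` (`true` = left): left indices first in increasing order,
followed by the right indices in decreasing order. -/
def biKey {m : ℕ} (χ : Fin m → Bool) (i : Fin m) : ℤ :=
  if χ i then (i.val : ℤ) else 2 * m - i.val

/-- The moment–cumulant relation defining the `(ℓ,r)`-cumulant functionals `κ`:
for every `χ` and every tuple, the joint moment is the sum over all bi-non-crossing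
partitions of the products of cumulants over blocks (blocks are restricted in the
induced order). -/
def BiMomCum {A : Type*} [Ring A] [Algebra ℂ A] (φ : A →ₗ[ℂ] ℂ)
    (κ : ∀ m : ℕ, (Fin m → Bool) → (Fin m → A) → ℂ) : Prop :=
  ∀ (m : ℕ) (χ : Fin m → Bool) (x : Fin m → A),
    φ (List.ofFn x).prod =
      ∑ π : {s : Setoid (Fin m) // NonCrossingOn (biKey χ) s},
        ∏ B ∈ blocksOf π.1,
          κ B.card (fun j => χ (B.orderIsoOfFin rfl j).val)
            (fun j => x (B.orderIsoOfFin rfl j).val)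

/-- The `(ℓ,r)`-cumulant `κ_{n,m}(a,b)`, with `n` left entries `a` and `m` right
entries `b`. -/
def kappaNM {A : Type*} (κ : ∀ m : ℕ, (Fin m → Bool) → (Fin m → A) → ℂ) (a b : A)
    (n m : ℕ) : ℂ :=
  κ (n + m) (fun i => decide (i.val < n)) (fun i => if i.val < n then a else b)

/-- The two-variable series `K_{a,b}(z,w) = Σ_{n,m ≥ 1} κ_{n,m}(a,b) zⁿ wᵐ`. -/
def KabSeries {A : Type*} (κ : ∀ m : ℕ, (Fin m → Bool) → (Fin m → A) → ℂ) (a b : A) :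
    MvPowerSeries (Fin 2) ℂ :=
  mvMk fun d => if 1 ≤ d 0 ∧ 1 ≤ d 1 then kappaNM κ a b (d 0) (d 1) else 0

/-- The free cumulant sequence `n ↦ κ_n(a)` of a single left variable `a`
(the `(ℓ,r)`-cumulants with all entries on the left). -/
def leftCumSeq {A : Type*} (κ : ∀ m : ℕ, (Fin m → Bool) → (Fin m → A) → ℂ) (a : A) :
    ℕ → ℂ := fun n => κ n (fun _ => true) (fun _ => a)

/-- The free cumulant sequence `n ↦ κ_n(b)` of a single right variable `b`. -/
def rightCumSeq {A : Type*} (κ : ∀ m : ℕ, (Fin m → Bool) → (Fin m → A) → ℂ) (b : A) :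
    ℕ → ℂ := fun n => κ n (fun _ => false) (fun _ => b)

namespace S16

/-- a downward-closed subset of `Fin k` is an initial segment. -/
lemma mem_iff_lt_card {k : ℕ} (S : Finset (Fin k))
    (hlow : ∀ j ∈ S, ∀ j' : Fin k, j' ≤ j → j' ∈ S) (j : Fin k) :
    j ∈ S ↔ j.val < S.card := by
  constructor
  · intro hj
    have hsub : Finset.Iic j ⊆ S := fun i hi => hlow j hj i (Finset.mem_Iic.mp hi)
    have := Finset.card_le_card hsub
    rw [Fin.card_Iic] at this
    omega
  · intro hj
    by_contra hns
    have hsub : S ⊆ Finset.Iio j := by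
      intro i hi
      rw [Finset.mem_Iio]
      by_contra hij
      exact hns (hlow i hi j (le_of_not_gt hij))
    have := Finset.card_le_card hsub
    rw [Fin.card_Iio] at this
    omega

lemma orderIso_lt_iff {M : ℕ} (B : Finset (Fin M)) (n : ℕ) (j : Fin B.card) :
    ((B.orderIsoOfFin rfl j).val).val < n ↔
      j.val < (B.filter fun i => i.val < n).card := by
  classical
  set e : Fin B.card ≃o {x // x ∈ B} := B.orderIsoOfFin rfl with he
  set S : Finset (Fin B.card) := Finset.univ.filter fun j => ((e j).val).val < n with hS
  have hcard : S.card = (B.filter fun i => i.val < n).card := by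
    apply Finset.card_bij (fun j _ => (e j).val)
    · intro a ha
      rw [Finset.mem_filter]
      have := Finset.mem_filter.mp (hS ▸ ha); exact ⟨(e a).2, this.2⟩
    · intro a₁ _ a₂ _ h
      exact e.injective (Subtype.ext h)
    · intro x hx
      rw [Finset.mem_filter] at hx
      refine ⟨e.symm ⟨x, hx.1⟩, ?_, by simp⟩
      rw [hS, Finset.mem_filter]
      refine ⟨Finset.mem_univ _, ?_⟩
      simpa using hx.2
  have hlow : ∀ j ∈ S, ∀ j' : Fin B.card, j' ≤ j → j' ∈ S := by
    intro j hj j' hle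
    rw [hS, Finset.mem_filter] at hj ⊢
    refine ⟨Finset.mem_univ _, ?_⟩
    have : (e j').val ≤ (e j).val := by
      have := e.monotone hle
      exact_mod_cast this
    have : ((e j').val).val ≤ ((e j).val).val := this
    omega
  have := mem_iff_lt_card S hlow j
  rw [hS, Finset.mem_filter] at this
  rw [← hcard]
  constructor
  · intro h; exact (this.mp ⟨Finset.mem_univ _, h⟩)
  · intro h; exact (this.mpr h).2

variable {A : Type*} (κ : ∀ m : ℕ, (Fin m → Bool) → (Fin m → A) → ℂ)

lemma kcongr {M M' : ℕ} (h : M = M')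
    {c : Fin M → Bool} {y : Fin M → A} {c' : Fin M' → Bool} {y' : Fin M' → A}
    (hc : ∀ j : Fin M, c j = c' (Fin.cast h j)) (hy : ∀ j, y j = y' (Fin.cast h j)) :
    κ M c y = κ M' c' y' := by
  subst h
  have h1 : c = c' := funext fun j => hc j
  have h2 : y = y' := funext fun j => hy j
  rw [h1, h2]

/-- The value of the per-block cumulant term for a mixed word (n `a`s then `b`s). -/
lemma gval (a b : A) {M : ℕ} (n : ℕ) (B : Finset (Fin M)) :
    κ B.card (fun j => decide (((B.orderIsoOfFin rfl j).val).val < n))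
      (fun j => if ((B.orderIsoOfFin rfl j).val).val < n then a else b)
    = kappaNM κ a b ((B.filter fun i => i.val < n).card)
        (B.card - (B.filter fun i => i.val < n).card) := by
  set n' := (B.filter fun i => i.val < n).card with hn'
  have hle : n' ≤ B.card := Finset.card_filter_le _ _
  have h : B.card = n' + (B.card - n') := by omega
  unfold kappaNM
  apply kcongr κ h
  · intro j
    have := orderIso_lt_iff B n j
    simp only [Fin.coe_cast]
    rw [decide_eq_decide, ← hn'] at *
    omega
  · intro j
    have := orderIso_lt_iff B n j
    rw [← hn'] at this
    simp only [Fin.coe_cast]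
    split <;> split <;> first | rfl | omega

def embL (n m : ℕ) : Fin n ↪ Fin (n + m) where
  toFun i := ⟨i.val, by have := i.isLt; omega⟩
  inj' i j h := by
    apply Fin.ext
    have := congrArg Fin.val h
    simpa using this

def embR (n m : ℕ) : Fin m ↪ Fin (n + m) where
  toFun i := ⟨n + i.val, by have := i.isLt; omega⟩
  inj' i j h := by
    apply Fin.ext
    have := congrArg Fin.val h
    simpa using this

def joinS {n m : ℕ} (σ : Setoid (Fin n)) (τ : Setoid (Fin m)) : Setoid (Fin (n + m)) where
  r x y := (∃ hx : x.val < n, ∃ hy : y.val < n, σ.r ⟨x.val, hx⟩ ⟨y.val, hy⟩) ∨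
    (∃ _ : n ≤ x.val, ∃ _ : n ≤ y.val,
      τ.r ⟨x.val - n, by have := x.isLt; omega⟩ ⟨y.val - n, by have := y.isLt; omega⟩)
  iseqv := by
    constructor
    · intro x
      by_cases h : x.val < n
      · exact Or.inl ⟨h, h, σ.iseqv.refl _⟩
      · exact Or.inr ⟨by omega, by omega, τ.iseqv.refl _⟩
    · rintro x y (⟨hx, hy, h⟩ | ⟨hx, hy, h⟩)
      · exact Or.inl ⟨hy, hx, σ.iseqv.symm h⟩
      · exact Or.inr ⟨hy, hx, τ.iseqv.symm h⟩
    · rintro x y z (⟨hx, hy, h⟩ | ⟨hx, hy, h⟩) (⟨hy', hz, h'⟩ | ⟨hy', hz, h'⟩)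
      · exact Or.inl ⟨hx, hz, σ.iseqv.trans h h'⟩
      · exact absurd hy' (not_le.mpr hy)
      · exact absurd hy (not_le.mpr hy')
      · exact Or.inr ⟨hx, hz, τ.iseqv.trans h h'⟩

def resL {n m : ℕ} (s : Setoid (Fin (n + m))) : Setoid (Fin n) :=
  Setoid.comap (fun i => ⟨i.val, by have := i.isLt; omega⟩) s

def resR {n m : ℕ} (s : Setoid (Fin (n + m))) : Setoid (Fin m) :=
  Setoid.comap (fun i => ⟨n + i.val, by have := i.isLt; omega⟩) s

def MixedS {n m : ℕ} (s : Setoid (Fin (n + m))) : Prop :=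
  ∃ i j : Fin (n + m), s.r i j ∧ i.val < n ∧ n ≤ j.val

lemma resL_joinS {n m : ℕ} (σ : Setoid (Fin n)) (τ : Setoid (Fin m)) :
    resL (joinS σ τ) = σ := by
  apply Setoid.ext
  intro x y
  show (joinS σ τ).r _ _ ↔ _
  constructor
  · rintro (⟨hx, hy, h⟩ | ⟨hx, hy, h⟩)
    · simpa using h
    · exact absurd hx (not_le.mpr x.isLt)
  · intro h
    exact Or.inl ⟨x.isLt, y.isLt, by simpa using h⟩

lemma rel_congr {α : Sort*} (s : Setoid α) {x x' y y' : α} (hx : x = x') (hy : y = y')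
    (h : s.r x y) : s.r x' y' := hx ▸ hy ▸ h

lemma resR_joinS {n m : ℕ} (σ : Setoid (Fin n)) (τ : Setoid (Fin m)) :
    resR (joinS σ τ) = τ := by
  apply Setoid.ext
  intro x y
  have ex : (⟨n + x.val - n, by have := x.isLt; omega⟩ : Fin m) = x := by
    apply Fin.ext; show n + x.val - n = x.val; omega
  have ey : (⟨n + y.val - n, by have := y.isLt; omega⟩ : Fin m) = y := by
    apply Fin.ext; show n + y.val - n = y.val; omega
  constructor
  · rintro (⟨hx, hy, h⟩ | ⟨hx, hy, h⟩)
    · exact absurd (show (⟨n + x.val, by have := x.isLt; omega⟩ : Fin (n + m)).val < n from hx)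
        (by show ¬ n + x.val < n; omega)
    · exact rel_congr τ ex ey h
  · intro h
    exact Or.inr ⟨Nat.le_add_right n x.val, Nat.le_add_right n y.val,
      rel_congr τ ex.symm ey.symm h⟩

lemma joinS_not_mixed {n m : ℕ} (σ : Setoid (Fin n)) (τ : Setoid (Fin m)) :
    ¬ MixedS (joinS σ τ) := by
  rintro ⟨i, j, (⟨hx, hy, h⟩ | ⟨hx, hy, h⟩), hi, hj⟩ <;> omega

lemma joinS_resL_resR {n m : ℕ} (s : Setoid (Fin (n + m))) (hs : ¬ MixedS s) :
    joinS (resL s) (resR s) = s := by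
  apply Setoid.ext
  intro x y
  have ex : (⟨x.val, by omega⟩ : Fin (n + m)) = x ∨ True := Or.inr trivial
  constructor
  · rintro (⟨hx, hy, h⟩ | ⟨hx, hy, h⟩)
    · exact rel_congr s (Fin.ext rfl) (Fin.ext rfl) h
    · refine rel_congr s (Fin.ext ?_) (Fin.ext ?_) h
      · show n + (x.val - n) = x.val; omega
      · show n + (y.val - n) = y.val; omega
  · intro h
    by_cases hx : x.val < n <;> by_cases hy : y.val < n
    · exact Or.inl ⟨hx, hy, rel_congr s (Fin.ext rfl).symm (Fin.ext rfl).symm h⟩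
    · exact absurd ⟨x, y, h, hx, by omega⟩ hs
    · exact absurd ⟨y, x, s.iseqv.symm h, hy, by omega⟩ hs
    · refine Or.inr ⟨by omega, by omega,
        rel_congr s (Fin.ext ?_).symm (Fin.ext ?_).symm h⟩
      · show n + (x.val - n) = x.val; omega
      · show n + (y.val - n) = y.val; omega


lemma biKey_of_lt {M n : ℕ} (i : Fin M) (hi : i.val < n) :
    biKey (fun j : Fin M => decide (j.val < n)) i = i.val := by
  simp [biKey, hi]

lemma biKey_of_ge {M n : ℕ} (i : Fin M) (hi : n ≤ i.val) :
    biKey (fun j : Fin M => decide (j.val < n)) i = 2 * M - i.val := by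
  simp [biKey, show ¬ i.val < n by omega]

lemma biKey_true {k : ℕ} (i : Fin k) : biKey (fun _ : Fin k => true) i = i.val := by
  simp [biKey]

lemma biKey_false {k : ℕ} (i : Fin k) : biKey (fun _ : Fin k => false) i = 2 * k - i.val := by
  simp [biKey]

lemma joinS_NC {n m : ℕ} {σ : Setoid (Fin n)} {τ : Setoid (Fin m)}
    (hσ : NonCrossingOn (biKey fun _ : Fin n => true) σ)
    (hτ : NonCrossingOn (biKey fun _ : Fin m => false) τ) :
    NonCrossingOn (biKey fun i : Fin (n + m) => decide (i.val < n)) (joinS σ τ) := by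
  intro p q r s h1 h2 h3 hpr hqs
  have hpM := p.isLt; have hqM := q.isLt; have hrM := r.isLt; have hsM := s.isLt
  rcases hpr with ⟨hp, hr, hσpr⟩ | ⟨hp, hr, hτpr⟩
  · -- all four are left points
    rw [biKey_of_lt p hp] at h1
    rw [biKey_of_lt r hr] at h2 h3
    have hq : q.val < n := by
      by_contra hq
      rw [biKey_of_ge q (by omega)] at h1 h2
      omega
    rw [biKey_of_lt q hq] at h1 h2
    have hs : s.val < n := by
      rcases hqs with ⟨_, hs, _⟩ | ⟨hq', _, _⟩
      · exact hs
      · omega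
    rcases hqs with ⟨hq', hs', hσqs⟩ | ⟨hq', _, _⟩
    · refine Or.inl ⟨hp, hq, ?_⟩
      refine hσ ⟨p.val, hp⟩ ⟨q.val, hq⟩ ⟨r.val, hr⟩ ⟨s.val, hs⟩ ?_ ?_ ?_ hσpr
        (rel_congr σ (Fin.ext rfl) (Fin.ext rfl) hσqs)
      · rw [biKey_true, biKey_true]; exact_mod_cast h1
      · rw [biKey_true, biKey_true]; exact_mod_cast h2
      · rw [biKey_true, biKey_true]
        rw [biKey_of_lt s hs] at h3
        exact_mod_cast h3
    · omega
  · -- all four are right points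
    rw [biKey_of_ge p hp] at h1
    rw [biKey_of_ge r hr] at h2 h3
    have hq : n ≤ q.val := by
      by_contra hq
      rw [biKey_of_lt q (by omega)] at h1
      omega
    rw [biKey_of_ge q hq] at h1 h2
    have hs : n ≤ s.val := by
      rcases hqs with ⟨hq', _, _⟩ | ⟨_, hs, _⟩
      · omega
      · exact hs
    rcases hqs with ⟨hq', _, _⟩ | ⟨hq', hs', hτqs⟩
    · omega
    · refine Or.inr ⟨hp, hq, ?_⟩
      rw [biKey_of_ge s hs] at h3
      refine hτ ⟨p.val - n, by omega⟩ ⟨q.val - n, by omega⟩ ⟨r.val - n, by omega⟩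
        ⟨s.val - n, by omega⟩ ?_ ?_ ?_ hτpr
        (rel_congr τ (Fin.ext rfl) (Fin.ext rfl) hτqs)
      · rw [biKey_false, biKey_false]; push_cast; omega
      · rw [biKey_false, biKey_false]; push_cast; omega
      · rw [biKey_false, biKey_false]; push_cast; omega

lemma resL_NC {n m : ℕ} {s : Setoid (Fin (n + m))}
    (hs : NonCrossingOn (biKey fun i : Fin (n + m) => decide (i.val < n)) s) :
    NonCrossingOn (biKey fun _ : Fin n => true) (resL s) := by
  intro p q r t h1 h2 h3 hpr hqs
  rw [biKey_true, biKey_true] at h1 h2 h3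
  have hpq := hs ⟨p.val, by omega⟩ ⟨q.val, by omega⟩ ⟨r.val, by omega⟩ ⟨t.val, by omega⟩
  rw [biKey_of_lt _ (show (⟨p.val, by omega⟩ : Fin (n+m)).val < n from p.isLt),
      biKey_of_lt _ (show (⟨q.val, by omega⟩ : Fin (n+m)).val < n from q.isLt),
      biKey_of_lt _ (show (⟨r.val, by omega⟩ : Fin (n+m)).val < n from r.isLt),
      biKey_of_lt _ (show (⟨t.val, by omega⟩ : Fin (n+m)).val < n from t.isLt)] at hpq
  exact hpq h1 h2 h3 hpr hqs

lemma resR_NC {n m : ℕ} {s : Setoid (Fin (n + m))}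
    (hs : NonCrossingOn (biKey fun i : Fin (n + m) => decide (i.val < n)) s) :
    NonCrossingOn (biKey fun _ : Fin m => false) (resR s) := by
  intro p q r t h1 h2 h3 hpr hqs
  rw [biKey_false, biKey_false] at h1 h2 h3
  have hpq := hs ⟨n + p.val, by omega⟩ ⟨n + q.val, by omega⟩ ⟨n + r.val, by omega⟩
    ⟨n + t.val, by omega⟩
  rw [biKey_of_ge _ (show n ≤ (⟨n + p.val, by omega⟩ : Fin (n+m)).val from Nat.le_add_right _ _),
      biKey_of_ge _ (show n ≤ (⟨n + q.val, by omega⟩ : Fin (n+m)).val from Nat.le_add_right _ _),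
      biKey_of_ge _ (show n ≤ (⟨n + r.val, by omega⟩ : Fin (n+m)).val from Nat.le_add_right _ _),
      biKey_of_ge _ (show n ≤ (⟨n + t.val, by omega⟩ : Fin (n+m)).val from Nat.le_add_right _ _)] at hpq
  have hppLt := p.isLt; have hqqLt := q.isLt; have hrrLt := r.isLt; have httLt := t.isLt
  refine hpq ?_ ?_ ?_ hpr hqs
  all_goals push_cast at *; omega

/-- the one-block (full) partition -/
def fullS (k : ℕ) : Setoid (Fin k) :=
  ⟨fun _ _ => True, ⟨fun _ => trivial, fun _ => trivial, fun _ _ => trivial⟩⟩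

lemma fullS_NC {k : ℕ} (key : Fin k → ℤ) : NonCrossingOn key (fullS k) :=
  fun _ _ _ _ _ _ _ _ _ => trivial


lemma block_joinS_left {n m : ℕ} (σ : Setoid (Fin n)) (τ : Setoid (Fin m))
    (i : Fin (n + m)) (i' : Fin n) (hii : (i' : ℕ) = i.val) :
    (Finset.univ.filter fun j => (joinS σ τ).r i j)
      = (Finset.univ.filter fun j => σ.r i' j).map (embL n m) := by
  have hi : i.val < n := hii ▸ i'.isLt
  ext x
  simp only [Finset.mem_filter, Finset.mem_univ, true_and, Finset.mem_map]
  constructor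
  · rintro (⟨hx, hy, h⟩ | ⟨hx, _, _⟩)
    · exact ⟨⟨x.val, hy⟩, rel_congr σ (Fin.ext hii.symm) rfl h, Fin.ext rfl⟩
    · omega
  · rintro ⟨y, hy, rfl⟩
    refine Or.inl ⟨hi, y.isLt, ?_⟩
    exact rel_congr σ (Fin.ext hii) (Fin.ext rfl).symm hy

lemma block_joinS_right {n m : ℕ} (σ : Setoid (Fin n)) (τ : Setoid (Fin m))
    (i : Fin (n + m)) (i' : Fin m) (hii : n + (i' : ℕ) = i.val) :
    (Finset.univ.filter fun j => (joinS σ τ).r i j)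
      = (Finset.univ.filter fun j => τ.r i' j).map (embR n m) := by
  have hi : n ≤ i.val := by omega
  ext x
  simp only [Finset.mem_filter, Finset.mem_univ, true_and, Finset.mem_map]
  constructor
  · rintro (⟨hx, _, _⟩ | ⟨hx, hy, h⟩)
    · omega
    · refine ⟨⟨x.val - n, by have := x.isLt; omega⟩,
        rel_congr τ (Fin.ext ?_) rfl h, Fin.ext ?_⟩
      · show i.val - n = i'.val; omega
      · show n + (x.val - n) = x.val; omega
  · rintro ⟨y, hy, rfl⟩
    refine Or.inr ⟨hi, Nat.le_add_right n y.val, ?_⟩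
    refine rel_congr τ (Fin.ext ?_) (Fin.ext ?_).symm hy
    · show i'.val = i.val - n; omega
    · show (n + y.val) - n = y.val; omega

lemma blocksOf_joinS {n m : ℕ} (σ : Setoid (Fin n)) (τ : Setoid (Fin m)) :
    blocksOf (joinS σ τ) = (blocksOf σ).image (fun B => B.map (embL n m))
      ∪ (blocksOf τ).image (fun B => B.map (embR n m)) := by
  ext B
  simp only [blocksOf, Finset.mem_union, Finset.mem_image, Finset.mem_univ, true_and]
  constructor
  · rintro ⟨i, rfl⟩
    by_cases hi : i.val < n
    · exact Or.inl ⟨_, ⟨⟨i.val, hi⟩, rfl⟩, (block_joinS_left σ τ i ⟨i.val, hi⟩ rfl).symm⟩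
    · refine Or.inr ⟨_, ⟨⟨i.val - n, by have := i.isLt; omega⟩, rfl⟩,
        (block_joinS_right σ τ i ⟨i.val - n, by have := i.isLt; omega⟩ (by simp; omega)).symm⟩
  · rintro (⟨B', ⟨i, rfl⟩, rfl⟩ | ⟨B', ⟨i, rfl⟩, rfl⟩)
    · exact ⟨embL n m i, block_joinS_left σ τ (embL n m i) i rfl⟩
    · exact ⟨embR n m i, block_joinS_right σ τ (embR n m i) i rfl⟩

lemma blocksOf_nonempty {k : ℕ} {s : Setoid (Fin k)} {B : Finset (Fin k)}
    (hB : B ∈ blocksOf s) : B.Nonempty := by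
  simp only [blocksOf, Finset.mem_image, Finset.mem_univ, true_and] at hB
  obtain ⟨i, rfl⟩ := hB
  exact ⟨i, by simp [s.iseqv.refl i]⟩

section Terms

variable {A : Type*} (κ : ∀ m : ℕ, (Fin m → Bool) → (Fin m → A) → ℂ) (a b : A)

/-- The per-block cumulant term for the word with `n` copies of `a` then copies of `b`. -/
def termM (n : ℕ) {M : ℕ} (B : Finset (Fin M)) : ℂ :=
  κ B.card (fun j => decide (((B.orderIsoOfFin rfl j).val).val < n))
    (fun j => if ((B.orderIsoOfFin rfl j).val).val < n then a else b)

lemma termM_eq (n : ℕ) {M : ℕ} (B : Finset (Fin M)) :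
    termM κ a b n B = kappaNM κ a b ((B.filter fun i => i.val < n).card)
      (B.card - (B.filter fun i => i.val < n).card) :=
  gval κ a b n B

lemma termM_map_embL {n m : ℕ} (B : Finset (Fin n)) :
    termM κ a b n (B.map (embL n m)) = κ B.card (fun _ => true) (fun _ => a) := by
  unfold termM
  apply kcongr κ (Finset.card_map _)
  · intro j
    rw [decide_eq_true_eq]
    have hmem := ((B.map (embL n m)).orderIsoOfFin rfl j).2
    rw [Finset.mem_map] at hmem
    obtain ⟨y, _, hy⟩ := hmem
    rw [← hy]
    exact y.isLt
  · intro j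
    have hmem := ((B.map (embL n m)).orderIsoOfFin rfl j).2
    rw [Finset.mem_map] at hmem
    obtain ⟨y, _, hy⟩ := hmem
    rw [if_pos (by rw [← hy]; exact y.isLt)]

lemma termM_map_embR {n m : ℕ} (B : Finset (Fin m)) :
    termM κ a b n (B.map (embR n m)) = κ B.card (fun _ => false) (fun _ => b) := by
  unfold termM
  apply kcongr κ (Finset.card_map _)
  · intro j
    rw [decide_eq_false_iff_not]
    have hmem := ((B.map (embR n m)).orderIsoOfFin rfl j).2
    rw [Finset.mem_map] at hmem
    obtain ⟨y, _, hy⟩ := hmem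
    rw [← hy]
    show ¬ n + y.val < n
    omega
  · intro j
    have hmem := ((B.map (embR n m)).orderIsoOfFin rfl j).2
    rw [Finset.mem_map] at hmem
    obtain ⟨y, _, hy⟩ := hmem
    rw [if_neg (by rw [← hy]; show ¬ n + y.val < n; omega)]

lemma prod_blocks_joinS {n m : ℕ} (σ : Setoid (Fin n)) (τ : Setoid (Fin m)) :
    (∏ B ∈ blocksOf (joinS σ τ), termM κ a b n B)
      = (∏ B ∈ blocksOf σ, κ B.card (fun _ => true) (fun _ => a)) *
        (∏ B ∈ blocksOf τ, κ B.card (fun _ => false) (fun _ => b)) := by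
  rw [blocksOf_joinS]
  have hdisj : Disjoint ((blocksOf σ).image (fun B => B.map (embL n m)))
      ((blocksOf τ).image (fun B => B.map (embR n m))) := by
    rw [Finset.disjoint_left]
    rintro B hBl hBr
    rw [Finset.mem_image] at hBl hBr
    obtain ⟨Ba, hBa, rfl⟩ := hBl
    obtain ⟨Bb, hBb, hEq⟩ := hBr
    obtain ⟨i, hi⟩ := blocksOf_nonempty hBa
    have h1 : embL n m i ∈ Bb.map (embR n m) := hEq ▸ Finset.mem_map_of_mem _ hi
    rw [Finset.mem_map] at h1
    obtain ⟨y, _, hy⟩ := h1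
    have := congrArg Fin.val hy
    show False
    have h2 : n + y.val = i.val := this
    have := i.isLt
    omega
  rw [Finset.prod_union hdisj,
    Finset.prod_image (fun x _ y _ h => Finset.map_injective _ h),
    Finset.prod_image (fun x _ y _ h => Finset.map_injective _ h)]
  congr 1
  · exact Finset.prod_congr rfl fun B _ => termM_map_embL κ a b B
  · exact Finset.prod_congr rfl fun B _ => termM_map_embR κ a b B

end Terms


section Claims

variable {A : Type*} (κ : ∀ m : ℕ, (Fin m → Bool) → (Fin m → A) → ℂ) (a b : A)

lemma claim1 (n m : ℕ) :
    (∑ π ∈ Finset.univ.filter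
        (fun π : {s : Setoid (Fin (n + m)) //
            NonCrossingOn (biKey fun i => decide (i.val < n)) s} => ¬ MixedS π.1),
      ∏ B ∈ blocksOf π.1, termM κ a b n B)
    = (∑ π : {s : Setoid (Fin n) // NonCrossingOn (biKey fun _ => true) s},
        ∏ B ∈ blocksOf π.1, κ B.card (fun _ => true) (fun _ => a))
      * (∑ π : {s : Setoid (Fin m) // NonCrossingOn (biKey fun _ => false) s},
        ∏ B ∈ blocksOf π.1, κ B.card (fun _ => false) (fun _ => b)) := by
  classical
  rw [Finset.sum_mul_sum, ← Finset.sum_product']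
  apply Finset.sum_nbij'
    (i := fun π => (⟨resL π.1, resL_NC π.2⟩, ⟨resR π.1, resR_NC π.2⟩))
    (j := fun στ => ⟨joinS στ.1.1 στ.2.1, joinS_NC στ.1.2 στ.2.2⟩)
  · intro π _
    simp [Finset.mem_product]
  · intro στ _
    rw [Finset.mem_filter]
    exact ⟨Finset.mem_univ _, joinS_not_mixed _ _⟩
  · intro π hπ
    apply Subtype.ext
    exact joinS_resL_resR π.1 (Finset.mem_filter.mp hπ).2
  · rintro ⟨⟨σ, hσ⟩, ⟨τ, hτ⟩⟩ _
    simp only [Prod.mk.injEq]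
    exact ⟨Subtype.ext (resL_joinS σ τ), Subtype.ext (resR_joinS σ τ)⟩
  · intro π hπ
    have h := joinS_resL_resR π.1 (Finset.mem_filter.mp hπ).2
    conv_lhs => rw [← h]
    exact prod_blocks_joinS κ a b _ _

lemma filter_lt_univ_card (n m : ℕ) :
    (Finset.univ.filter fun i : Fin (n + m) => i.val < n).card = n := by
  have : (Finset.univ.filter fun i : Fin (n + m) => i.val < n)
      = Finset.map (embL n m) Finset.univ := by
    ext x
    simp only [Finset.mem_filter, Finset.mem_univ, true_and, Finset.mem_map]
    constructor
    · intro h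
      exact ⟨⟨x.val, h⟩, Fin.ext rfl⟩
    · rintro ⟨y, _, rfl⟩
      exact y.isLt
  rw [this, Finset.card_map, Finset.card_univ, Fintype.card_fin]

lemma blocksOf_fullS {k : ℕ} (hk : 0 < k) :
    blocksOf (fullS k) = {(Finset.univ : Finset (Fin k))} := by
  unfold blocksOf
  have h : (fun i : Fin k => Finset.univ.filter fun j => (fullS k).r i j)
      = fun _ => (Finset.univ : Finset (Fin k)) := by
    funext i
    simp [fullS]
    exact fun _ => trivial
  rw [h]
  exact Finset.image_const ⟨⟨0, hk⟩, Finset.mem_univ _⟩ _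

lemma termM_univ (n m : ℕ) :
    termM κ a b n (Finset.univ : Finset (Fin (n + m))) = kappaNM κ a b n m := by
  rw [termM_eq, filter_lt_univ_card, Finset.card_univ, Fintype.card_fin,
    Nat.add_sub_cancel_left]

lemma claim2 {n m : ℕ} (hn : 1 ≤ n) (hm : 1 ≤ m)
    (IH : ∀ n' m' : ℕ, 1 ≤ n' → 1 ≤ m' → n' + m' < n + m → kappaNM κ a b n' m' = 0) :
    (∑ π ∈ Finset.univ.filter
        (fun π : {s : Setoid (Fin (n + m)) //
            NonCrossingOn (biKey fun i => decide (i.val < n)) s} => MixedS π.1),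
      ∏ B ∈ blocksOf π.1, termM κ a b n B) = kappaNM κ a b n m := by
  classical
  have htop : (⟨fullS (n + m), fullS_NC _⟩ : {s : Setoid (Fin (n + m)) //
      NonCrossingOn (biKey fun i => decide (i.val < n)) s}) ∈
      Finset.univ.filter (fun π => MixedS π.1) := by
    rw [Finset.mem_filter]
    exact ⟨Finset.mem_univ _, ⟨⟨0, by omega⟩, ⟨n, by omega⟩, trivial, hn, le_refl n⟩⟩
  rw [Finset.sum_eq_single_of_mem _ htop ?zero]
  · rw [blocksOf_fullS (by omega), Finset.prod_singleton]
    exact termM_univ κ a b n m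
  case zero =>
    rintro ⟨s, hsNC⟩ hmem hne
    obtain ⟨i, j, hr, hi, hj⟩ := (Finset.mem_filter.mp hmem).2
    have hBmem : (Finset.univ.filter fun x => s.r i x) ∈ blocksOf s :=
      Finset.mem_image_of_mem _ (Finset.mem_univ i)
    apply Finset.prod_eq_zero hBmem
    set B := Finset.univ.filter fun x => s.r i x with hB
    have hiB : i ∈ B := Finset.mem_filter.mpr ⟨Finset.mem_univ _, s.iseqv.refl i⟩
    have hjB : j ∈ B := Finset.mem_filter.mpr ⟨Finset.mem_univ _, hr⟩
    set n' := (B.filter fun x => x.val < n).card with hn'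
    have h1 : 1 ≤ n' := Finset.card_pos.mpr
      ⟨i, Finset.mem_filter.mpr ⟨hiB, hi⟩⟩
    have h2 : n' < B.card := by
      apply Finset.card_lt_card
      rw [Finset.ssubset_iff_of_subset (Finset.filter_subset _ _)]
      exact ⟨j, hjB, by rw [Finset.mem_filter]; push_neg; intro _; omega⟩
    have hle : B.card ≤ n + m := by
      have := Finset.card_le_card (Finset.subset_univ B)
      rwa [Finset.card_univ, Fintype.card_fin] at this
    rcases lt_or_eq_of_le hle with hlt | heq
    · rw [termM_eq]
      exact IH n' (B.card - n') h1 (by omega) (by omega)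
    · exfalso
      apply hne
      apply Subtype.ext
      have hBuniv : B = Finset.univ := Finset.eq_univ_of_card B
        (by rw [heq, Fintype.card_fin])
      apply Setoid.ext
      intro x y
      have hx : s.r i x := (Finset.mem_filter.mp (hBuniv ▸ Finset.mem_univ x)).2
      have hy : s.r i y := (Finset.mem_filter.mp (hBuniv ▸ Finset.mem_univ y)).2
      exact ⟨fun _ => trivial, fun _ => s.iseqv.trans (s.iseqv.symm hx) hy⟩

end Claims


lemma ofFn_prod {A : Type*} [Monoid A] (a b : A) (n m : ℕ) :
    (List.ofFn fun i : Fin (n + m) => if i.val < n then a else b).prod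
      = a ^ n * b ^ m := by
  have e : (List.ofFn fun i : Fin (n + m) => if (i : ℕ) < n then a else b)
      = List.ofFn (fun _ : Fin n => a) ++ List.ofFn (fun _ : Fin m => b) := by
    rw [List.ofFn_add]
    congr 1
    · exact congrArg List.ofFn (funext fun i => if_pos (by simpa using i.isLt))
    · refine congrArg List.ofFn (funext fun i => if_neg ?_)
      show ¬ (Fin.natAdd n i : Fin (n + m)).val < n
      rw [Fin.coe_natAdd]
      omega
  rw [e, List.prod_append]
  simp

end S16

/-- If `a, b ∈ A` satisfy `φ(aⁿbᵐ) = φ(aⁿ)·φ(bᵐ)` for all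
`n, m ≥ 0` and `φ(b) ≠ 0`, then all mixed `(ℓ,r)`-cumulants `κ_{n,m}(a,b)` with
`n, m ≥ 1` vanish; hence `K_{a,b}(z,w) = 0` and `T_{a,b}(z,w) = 1` (i.e.
`w·(T_{a,b} − 1) = K_{a,b}(z, c_b^{⟨−1⟩}(w)) = 0`). -/
theorem mixed_cumulants_vanish_of_factorizing
    (A : Type*) [Ring A] [Algebra ℂ A] (φ : A →ₗ[ℂ] ℂ) (hφ1 : φ 1 = 1) (a b : A)
    (κ : ∀ m : ℕ, (Fin m → Bool) → (Fin m → A) → ℂ) (hBMC : BiMomCum φ κ)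
    (hb : φ b ≠ 0)
    (hindep : ∀ n m : ℕ, φ (a ^ n * b ^ m) = φ (a ^ n) * φ (b ^ m)) :
    (∀ n m : ℕ, 1 ≤ n → 1 ≤ m → kappaNM κ a b n m = 0) ∧
    KabSeries κ a b = 0 ∧
    ∀ Icb : PowerSeries ℂ,
      pscomp (phiSeries (rightCumSeq κ b)) Icb = PowerSeries.X →
      mvcomp (KabSeries κ a b) (MvPowerSeries.X 0) (toMv1 Icb) = 0 := by
  have key : ∀ N : ℕ, ∀ n m : ℕ, 1 ≤ n → 1 ≤ m → n + m = N → kappaNM κ a b n m = 0 := by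
    intro N
    induction N using Nat.strong_induction_on with
    | _ N IH =>
      intro n m hn hm hN
      have e1 : φ (a ^ n * b ^ m)
          = ∑ π : {s : Setoid (Fin (n + m)) //
              NonCrossingOn (biKey fun i => decide (i.val < n)) s},
              ∏ B ∈ blocksOf π.1, S16.termM κ a b n B := by
        have h := hBMC (n + m) (fun i => decide (i.val < n))
          (fun i => if i.val < n then a else b)
        rw [S16.ofFn_prod] at h
        exact h
      have e2 : φ (a ^ n)
          = ∑ π : {s : Setoid (Fin n) // NonCrossingOn (biKey fun _ => true) s},
              ∏ B ∈ blocksOf π.1, κ B.card (fun _ => true) (fun _ => a) := by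
        have h := hBMC n (fun _ => true) (fun _ => a)
        rw [show (List.ofFn fun _ : Fin n => a).prod = a ^ n by simp] at h
        exact h
      have e3 : φ (b ^ m)
          = ∑ π : {s : Setoid (Fin m) // NonCrossingOn (biKey fun _ => false) s},
              ∏ B ∈ blocksOf π.1, κ B.card (fun _ => false) (fun _ => b) := by
        have h := hBMC m (fun _ => false) (fun _ => b)
        rw [show (List.ofFn fun _ : Fin m => b).prod = b ^ m by simp] at h
        exact h
      have h1 : (∑ π : {s : Setoid (Fin (n + m)) //
              NonCrossingOn (biKey fun i => decide (i.val < n)) s},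
              ∏ B ∈ blocksOf π.1, S16.termM κ a b n B)
          = (∑ π ∈ Finset.univ.filter (fun π : {s : Setoid (Fin (n + m)) //
                NonCrossingOn (biKey fun i => decide (i.val < n)) s} => S16.MixedS π.1),
              ∏ B ∈ blocksOf π.1, S16.termM κ a b n B)
            + (∑ π ∈ Finset.univ.filter (fun π : {s : Setoid (Fin (n + m)) //
                NonCrossingOn (biKey fun i => decide (i.val < n)) s} => ¬ S16.MixedS π.1),
              ∏ B ∈ blocksOf π.1, S16.termM κ a b n B) :=
        (Finset.sum_filter_add_sum_filter_not Finset.univ _ _).symm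
      have hIH : ∀ n' m' : ℕ, 1 ≤ n' → 1 ≤ m' → n' + m' < n + m →
          kappaNM κ a b n' m' = 0 := fun n' m' h1 h2 h3 =>
        IH (n' + m') (by omega) n' m' h1 h2 rfl
      have c2 := S16.claim2 κ a b hn hm hIH
      have c1 := S16.claim1 κ a b n m
      have hfin : φ (a ^ n) * φ (b ^ m)
          = kappaNM κ a b n m + φ (a ^ n) * φ (b ^ m) := by
        conv_lhs => rw [← hindep n m, e1, h1, c2, c1, ← e2, ← e3]
      exact add_eq_right.mp hfin.symm
  have part1 : ∀ n m : ℕ, 1 ≤ n → 1 ≤ m → kappaNM κ a b n m = 0 :=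
    fun n m hn hm => key (n + m) n m hn hm rfl
  have part2 : KabSeries κ a b = 0 := by
    apply MvPowerSeries.ext
    intro d
    rw [map_zero]
    show (if 1 ≤ d 0 ∧ 1 ≤ d 1 then kappaNM κ a b (d 0) (d 1) else 0) = 0
    split_ifs with h
    · exact part1 _ _ h.1 h.2
    · rfl
  refine ⟨part1, part2, ?_⟩
  intro Icb _
  rw [part2]
  apply MvPowerSeries.ext
  intro d
  rw [map_zero]
  show (∑ p ∈ Finset.range (d 0 + d 1 + 1) ×ˢ Finset.range (d 0 + d 1 + 1),
    (MvPowerSeries.coeff (Finsupp.single 0 p.1 + Finsupp.single 1 p.2) (0 : MvPowerSeries (Fin 2) ℂ)) *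
      MvPowerSeries.coeff d ((MvPowerSeries.X 0 : MvPowerSeries (Fin 2) ℂ) ^ p.1 * (toMv1 Icb) ^ p.2)) = 0
  simp


end
end
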